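/- arXiv:2001.09323 — 5 statements merged into one kernel-verified Lean document; each statement's English description precedes it below -/
import Mathlib

section
/- Let λ ∈ ℂ and let ℓ, n, r, s be natural numbers. Then for every x ∈ ℂ: Σ_{k=0}^{n+r} λ^{n+r−k} C(n+r,k) C(ℓ+k+r,r) B_{ℓ+k}(x) + (−1)^{ℓ+n+r+1} Σ_{k=0}^{ℓ+r} λ^{ℓ+r−k} C(ℓ+r,k) C(n+k+r,r) B_{n+k}(1+s−λ−x) = (r+1) Σ_{k=1}^{s} Σ_{j=0}^{r+1} C(n+r,j) C(ℓ+r,r+1−j) (x−k)^{ℓ+j−1} (x+λ−k)^{n+r−j}, with the convention that a term whose binomial coefficient C(ℓ+r,r+1−j) vanishes is zero (this covers the only case ℓ = j = 0 where the exponent ℓ+j−1 would be negative). -/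
open scoped BigOperators
open Finset

noncomputable section

/-- The classical Bernoulli polynomial `B_n(x)` (with `B_1(0) = -1/2`),
evaluated at a complex number `x`. -/
def bernPoly (n : ℕ) (x : ℂ) : ℂ := Polynomial.aeval x (Polynomial.bernoulli n)

end

lemma neg_one_pow_sub_ℂ {k M : ℕ} (h : k ≤ M) : (-1:ℂ)^(M-k) = (-1)^M * (-1)^k := by
  have h2 : (-1:ℂ)^(M-k) * ((-1)^k * (-1)^k) = (-1)^M * (-1)^k := by
    rw [← mul_assoc, ← pow_add, Nat.sub_add_cancel h]
  simpa [← pow_add, ← two_mul, pow_mul] using h2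

lemma diff_step (j : ℕ) (f : ℕ → ℂ) :
    ∑ k ∈ range (j+2), (-1:ℂ)^(j+1-k) * ((j+1).choose k : ℂ) * f k
      = ∑ k ∈ range (j+1), (-1:ℂ)^(j-k) * (j.choose k : ℂ) * (f (k+1) - f k) := by
  rw [Finset.sum_range_succ' _ (j+1)]
  have e1 : ∀ k, k ∈ range (j+1) →
      (-1:ℂ)^(j+1-(k+1)) * ((j+1).choose (k+1) : ℂ) * f (k+1)
        = (-1:ℂ)^(j-k) * (j.choose k : ℂ) * f (k+1)
          + (-1:ℂ)^(j-k) * (j.choose (k+1) : ℂ) * f (k+1) := by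
    intro k hk
    have : j + 1 - (k+1) = j - k := by omega
    rw [this, Nat.choose_succ_succ j k]
    push_cast
    ring
  rw [Finset.sum_congr rfl e1, Finset.sum_add_distrib]
  have e2 : ∑ k ∈ range (j+1), (-1:ℂ)^(j-k) * (j.choose (k+1) : ℂ) * f (k+1)
      + (-1:ℂ)^(j+1-0) * ((j+1).choose 0 : ℂ) * f 0
      = - ∑ k ∈ range (j+1), (-1:ℂ)^(j-k) * (j.choose k : ℂ) * f k := by
    rw [Finset.sum_range_succ' (fun k => (-1:ℂ)^(j-k) * (j.choose k : ℂ) * f k) j]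
    rw [Finset.sum_range_succ]  -- peel top of LHS sum : k = j, choose j (j+1) = 0
    simp only [Nat.choose_succ_self, Nat.cast_zero, mul_zero, zero_mul, add_zero]
    rw [neg_add, ← Finset.sum_neg_distrib]
    congr 1
    · apply Finset.sum_congr rfl
      intro k hk
      rw [mem_range] at hk
      have h1 : j - k = (j - (k+1)) + 1 := by omega
      rw [h1, pow_succ]
      ring
    · have : j + 1 - 0 = j + 1 := rfl
      rw [this, pow_succ]
      simp
  rw [add_assoc, e2, ← Finset.sum_neg_distrib, ← Finset.sum_add_distrib]
  apply Finset.sum_congr rfl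
  intro k hk
  ring


lemma diff_choose (j : ℕ) : ∀ a b : ℕ,
    ∑ k ∈ range (j+1), (-1:ℂ)^(j-k) * (j.choose k : ℂ) * ((a+k).choose b : ℂ)
      = if j ≤ b then ((a.choose (b-j) : ℕ) : ℂ) else 0 := by
  induction j with
  | zero => intro a b; simp
  | succ j ih =>
    intro a b
    rw [show j + 1 + 1 = j + 2 from rfl, diff_step j (fun k => ((a+k).choose b : ℂ))]
    rcases Nat.eq_zero_or_pos b with hb | hb
    · subst hb
      simp
    · obtain ⟨b', rfl⟩ := Nat.exists_eq_add_of_le hb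
      have e1 : ∀ k, (((a+(k+1)).choose (1+b') : ℕ) : ℂ) - ((a+k).choose (1+b') : ℂ)
          = (((a+k).choose b' : ℕ) : ℂ) := by
        intro k
        have : (a+(k+1)).choose (1+b') = (a+k).choose (1+b') + (a+k).choose b' := by
          rw [show a+(k+1) = (a+k)+1 by ring, show 1+b' = b'+1 by ring,
            Nat.choose_succ_succ' (a+k) b']
          omega
        rw [this]
        push_cast
        ring
      calc ∑ k ∈ range (j+1), (-1:ℂ)^(j-k) * (j.choose k : ℂ)
              * ((((a+(k+1)).choose (1+b') : ℕ) : ℂ) - ((a+k).choose (1+b') : ℂ))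
          = ∑ k ∈ range (j+1), (-1:ℂ)^(j-k) * (j.choose k : ℂ) * ((a+k).choose b' : ℂ) := by
            apply Finset.sum_congr rfl; intro k _; rw [e1]
        _ = if j ≤ b' then ((a.choose (b'-j) : ℕ) : ℂ) else 0 := ih a b'
        _ = if j+1 ≤ 1+b' then ((a.choose (1+b'-(j+1)) : ℕ) : ℂ) else 0 := by
            have h3 : b' - j = 1+b'-(j+1) := by omega
            rw [h3]
            by_cases h : j ≤ b'
            · rw [if_pos h, if_pos (by omega)]
            · rw [if_neg h, if_neg (by omega)]


lemma gessel_inner_sum (m j L : ℕ) (hL : 1 ≤ L + j) (u w : ℂ) :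
    ∑ k ∈ range (m+1), (w-u)^(m-k) * (m.choose k : ℂ) * (k.choose j : ℂ) * u^(L+k-1)
      = (m.choose j : ℂ) * u^(L+j-1) * w^(m-j) := by
  by_cases hjm : j ≤ m
  · have hsub : Ico j (m+1) ⊆ range (m+1) := by
      rw [range_eq_Ico]; exact Finset.Ico_subset_Ico (Nat.zero_le _) le_rfl
    rw [← Finset.sum_subset hsub (fun x hx hnx => by
      have hxr : x < m + 1 := mem_range.mp hx
      have hxj : x < j := by
        rcases Nat.lt_or_ge x j with h | h
        · exact h
        · exact absurd (Finset.mem_Ico.mpr ⟨h, hxr⟩) hnx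
      rw [Nat.choose_eq_zero_of_lt hxj]
      ring)]
    rw [Finset.sum_Ico_eq_sum_range]
    have hr : m + 1 - j = (m - j) + 1 := by omega
    rw [hr]
    have e1 : ∀ t, t ∈ range ((m-j)+1) →
        (w-u)^(m-(j+t)) * (m.choose (j+t) : ℂ) * ((j+t).choose j : ℂ) * u^(L+(j+t)-1)
        = (m.choose j : ℂ) * u^(L+j-1) * (u^t * (w-u)^((m-j)-t) * ((m-j).choose t : ℂ)) := by
      intro t ht
      rw [mem_range] at ht
      have h1 : Nat.choose m (j+t) * Nat.choose (j+t) j = Nat.choose m j * Nat.choose (m-j) (t) := by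
        have := Nat.choose_mul (n := m) (k := j+t) (s := j) (by omega)
        simpa using this
      have h2 : u^(L+(j+t)-1) = u^(L+j-1) * u^t := by
        rw [← pow_add]; congr 1; omega
      have h3 : m - (j+t) = (m-j) - t := by omega
      calc (w-u)^(m-(j+t)) * (m.choose (j+t) : ℂ) * ((j+t).choose j : ℂ) * u^(L+(j+t)-1)
          = ((Nat.choose m (j+t) * Nat.choose (j+t) j : ℕ) : ℂ) * ((w-u)^(m-(j+t)) * u^(L+(j+t)-1)) := by
            push_cast; ring
        _ = _ := by
            rw [h1, h3, h2]; push_cast; ring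
    rw [Finset.sum_congr rfl e1, ← Finset.mul_sum]
    have : ∑ t ∈ range ((m-j)+1), u^t * (w-u)^((m-j)-t) * ((m-j).choose t : ℂ) = w^(m-j) := by
      rw [← add_pow]
      congr 1
      ring
    rw [this]
  · have : (m.choose j : ℂ) = 0 := by
      rw [Nat.choose_eq_zero_of_lt (by omega)]; norm_num
    rw [this]
    rw [Finset.sum_eq_zero, zero_mul, zero_mul]
    intro k hk
    rw [mem_range] at hk
    rw [Nat.choose_eq_zero_of_lt (show k < j by omega)]
    ring


lemma gessel_vandermonde (L r k : ℕ) :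
    ((L+k+r).choose (r+1) : ℂ) = ∑ j ∈ range (r+2), (k.choose j : ℂ) * ((L+r).choose (r+1-j) : ℂ) := by
  have h := Nat.add_choose_eq k (L+r) (r+1)
  rw [Finset.Nat.sum_antidiagonal_eq_sum_range_succ_mk] at h
  have h2 : L + k + r = k + (L+r) := by omega
  rw [h2, h]
  push_cast
  rfl

lemma gessel_keyE (L n r : ℕ) (u w : ℂ) :
    ∑ k ∈ range (n+r+1), (w-u)^(n+r-k) * ((n+r).choose k : ℂ) * (((L:ℂ)+(k:ℂ)) * ((L+k+r).choose r : ℂ)) * u^(L+k-1)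
      = ((r:ℂ)+1) * ∑ j ∈ range (r+2),
          ((n+r).choose j : ℂ) * ((L+r).choose (r+1-j) : ℂ) * u^(L+j-1) * w^(n+r-j) := by
  have step1 : ∀ k : ℕ, ((L:ℂ)+(k:ℂ)) * ((L+k+r).choose r : ℂ) = ((r:ℂ)+1) * ((L+k+r).choose (r+1) : ℂ) := by
    intro k
    have h := Nat.choose_succ_right_eq (L+k+r) r
    have h2 : L+k+r-r = L+k := by omega
    rw [h2] at h
    have := congrArg (fun z : ℕ => (z : ℂ)) h
    push_cast at this ⊢
    linear_combination -this
  calc ∑ k ∈ range (n+r+1), (w-u)^(n+r-k) * ((n+r).choose k : ℂ) * (((L:ℂ)+(k:ℂ)) * ((L+k+r).choose r : ℂ)) * u^(L+k-1)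
      = ∑ k ∈ range (n+r+1), ∑ j ∈ range (r+2), ((r:ℂ)+1) * ((L+r).choose (r+1-j) : ℂ) *
          ((w-u)^(n+r-k) * ((n+r).choose k : ℂ) * (k.choose j : ℂ) * u^(L+k-1)) := by
        apply Finset.sum_congr rfl
        intro k _
        rw [step1 k, gessel_vandermonde L r k, Finset.mul_sum, Finset.mul_sum, Finset.sum_mul]
        apply Finset.sum_congr rfl
        intro j _
        ring
    _ = ∑ j ∈ range (r+2), ((r:ℂ)+1) * ((L+r).choose (r+1-j) : ℂ) *
          ∑ k ∈ range (n+r+1), (w-u)^(n+r-k) * ((n+r).choose k : ℂ) * (k.choose j : ℂ) * u^(L+k-1) := by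
        rw [Finset.sum_comm]
        apply Finset.sum_congr rfl
        intro j _
        rw [Finset.mul_sum]
    _ = _ := by
        rw [Finset.mul_sum]
        apply Finset.sum_congr rfl
        intro j hj
        by_cases hLj : 1 ≤ L + j
        · rw [gessel_inner_sum (n+r) j L hLj u w]
          ring
        · have hL0 : L = 0 := by omega
          have hj0 : j = 0 := by omega
          subst hL0; subst hj0
          have hz : (((0+r).choose (r+1-0) : ℕ) : ℂ) = 0 := by
            norm_num [Nat.choose_succ_self]
          rw [hz]
          ring



lemma bernPoly_eq_sum (m : ℕ) (z : ℂ) :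
    bernPoly m z = ∑ i ∈ range (m+1), ((bernoulli i : ℚ) : ℂ) * (m.choose i : ℂ) * z^(m-i) := by
  rw [bernPoly, Polynomial.bernoulli, map_sum]
  apply Finset.sum_congr rfl
  intro i _
  rw [Polynomial.aeval_monomial]
  rw [eq_ratCast (algebraMap ℚ ℂ)]
  push_cast
  ring

lemma bernPoly_add_eq (m : ℕ) (x y : ℂ) :
    bernPoly m (x+y) = ∑ j ∈ range (m+1), (m.choose j : ℂ) * bernPoly j x * y^(m-j) := by
  rw [bernPoly_eq_sum]
  have lhs_eq : ∑ i ∈ range (m+1), ((bernoulli i : ℚ) : ℂ) * (m.choose i : ℂ) * (x+y)^(m-i)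
      = ∑ i ∈ range (m+1), ∑ t ∈ range (m+1-i),
          ((bernoulli i : ℚ) : ℂ) * (m.choose i : ℂ) * ((m-i).choose t : ℂ) * x^t * y^(m-i-t) := by
    apply Finset.sum_congr rfl
    intro i hi
    rw [add_pow, Finset.mul_sum]
    have : m + 1 - i = (m-i) + 1 := by rw [mem_range] at hi; omega
    rw [this]
    apply Finset.sum_congr rfl
    intro t _
    ring
  rw [lhs_eq]
  have rhs_eq : ∑ j ∈ range (m+1), (m.choose j : ℂ) * bernPoly j x * y^(m-j)
      = ∑ j ∈ range (m+1), ∑ i ∈ range (j+1),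
          (m.choose j : ℂ) * (((bernoulli i : ℚ) : ℂ) * (j.choose i : ℂ) * x^(j-i)) * y^(m-j) := by
    apply Finset.sum_congr rfl
    intro j _
    rw [bernPoly_eq_sum, Finset.mul_sum, Finset.sum_mul]
  rw [rhs_eq]
  rw [Finset.sum_sigma' (range (m+1)) (fun i => range (m+1-i))
      (fun i t => ((bernoulli i : ℚ) : ℂ) * (m.choose i : ℂ) * ((m-i).choose t : ℂ) * x^t * y^(m-i-t))]
  rw [Finset.sum_sigma' (range (m+1)) (fun j => range (j+1))
      (fun j i => (m.choose j : ℂ) * (((bernoulli i : ℚ) : ℂ) * (j.choose i : ℂ) * x^(j-i)) * y^(m-j))]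
  apply Finset.sum_nbij' (i := fun p => (⟨p.1 + p.2, p.1⟩ : Σ _ : ℕ, ℕ))
    (j := fun p => (⟨p.2, p.1 - p.2⟩ : Σ _ : ℕ, ℕ))
  · intro a ha
    simp only [Finset.mem_sigma, mem_range] at ha ⊢
    omega
  · intro a ha
    simp only [Finset.mem_sigma, mem_range] at ha ⊢
    omega
  · intro a ha
    obtain ⟨p, q⟩ := a
    simp only [Finset.mem_sigma, mem_range] at ha
    have h : p + q - p = q := by omega
    rw [h]
  · intro a ha
    obtain ⟨p, q⟩ := a
    simp only [Finset.mem_sigma, mem_range] at ha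
    have h : q + (p - q) = p := by omega
    rw [h]
  · intro a ha
    obtain ⟨i, t⟩ := a
    simp only [Finset.mem_sigma, mem_range] at ha
    simp only
    have hc : m.choose (i+t) * (i+t).choose i = m.choose i * (m-i).choose t := by
      have h := Nat.choose_mul (n := m) (k := i+t) (s := i) (by omega)
      simpa using h
    have hcast := congrArg (fun z : ℕ => (z : ℂ)) hc
    push_cast at hcast
    have h1 : (i+t) - i = t := by omega
    have h2 : m - i - t = m - (i+t) := by omega
    rw [h1, h2]
    calc ((bernoulli i : ℚ) : ℂ) * (m.choose i : ℂ) * ((m-i).choose t : ℂ) * x^t * y^(m-(i+t))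
        = ((m.choose i : ℂ) * ((m-i).choose t : ℂ)) * (((bernoulli i : ℚ) : ℂ) * x^t * y^(m-(i+t))) := by ring
      _ = ((m.choose (i+t) : ℂ) * ((i+t).choose i : ℂ)) * (((bernoulli i : ℚ) : ℂ) * x^t * y^(m-(i+t))) := by
          rw [← hcast]
      _ = _ := by ring

lemma bernPoly_sum_smaller (m : ℕ) (y : ℂ) :
    ∑ j ∈ range m, (m.choose j : ℂ) * bernPoly j y = (m : ℂ) * y^(m-1) := by
  cases m with
  | zero => simp
  | succ m' =>
    have h := Polynomial.sum_bernoulli m'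
    have h2 := congrArg (fun p : Polynomial ℚ => Polynomial.aeval y p) h
    simp only [map_sum] at h2
    have h3 : ∀ j : ℕ, Polynomial.aeval y (((m'+1).choose j : ℚ) • Polynomial.bernoulli j)
        = ((m'+1).choose j : ℂ) * bernPoly j y := by
      intro j
      rw [map_smul, bernPoly]
      rw [Algebra.smul_def, eq_ratCast (algebraMap ℚ ℂ)]
      push_cast
      rfl
    rw [Finset.sum_congr rfl (fun j _ => h3 j)] at h2
    rw [h2, Polynomial.aeval_monomial, eq_ratCast (algebraMap ℚ ℂ)]
    push_cast
    ring

lemma bernPoly_succ (m : ℕ) (y : ℂ) :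
    bernPoly m (y + 1) = bernPoly m y + (m : ℂ) * y^(m-1) := by
  rw [bernPoly_add_eq m y 1]
  rw [Finset.sum_range_succ]
  simp only [Nat.choose_self, Nat.cast_one, one_mul, Nat.sub_self, pow_zero, mul_one, one_pow]
  rw [bernPoly_sum_smaller]
  ring

lemma bernPoly_one (m : ℕ) : bernPoly m 1 = (-1:ℂ)^m * ((bernoulli m : ℚ) : ℂ) := by
  have h : bernPoly m 1 = ((((Polynomial.bernoulli m).eval 1 : ℚ)) : ℂ) := by
    rw [bernPoly]
    have := Polynomial.aeval_algebraMap_apply_eq_algebraMap_eval (A := ℂ) (1 : ℚ) (Polynomial.bernoulli m)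
    rw [eq_ratCast (algebraMap ℚ ℂ)] at this
    rw [Rat.cast_one] at this
    exact this.trans (eq_ratCast _ _)
  rw [h, Polynomial.bernoulli_eval_one, bernoulli'_eq_bernoulli]
  push_cast
  ring

lemma bernPoly_one_sub (m : ℕ) (y : ℂ) :
    bernPoly m (1 - y) = (-1:ℂ)^m * bernPoly m y := by
  have h : (1:ℂ) - y = 1 + (-y) := by ring
  rw [h, bernPoly_add_eq m 1 (-y)]
  rw [bernPoly_eq_sum m y, Finset.mul_sum]
  apply Finset.sum_congr rfl
  intro j hj
  rw [mem_range] at hj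
  rw [bernPoly_one]
  have hsign : (-1:ℂ)^j * (-1:ℂ)^(m-j) = (-1:ℂ)^m := by
    rw [← pow_add]; congr 1; omega
  calc (m.choose j : ℂ) * ((-1:ℂ)^j * ((bernoulli j : ℚ) : ℂ)) * (-y)^(m-j)
      = (m.choose j : ℂ) * ((-1:ℂ)^j * ((bernoulli j : ℚ) : ℂ)) * ((-1:ℂ)^(m-j) * y^(m-j)) := by
        rw [neg_pow y (m-j)]
    _ = ((-1:ℂ)^j * (-1:ℂ)^(m-j)) * ((m.choose j : ℂ) * ((bernoulli j : ℚ) : ℂ) * y^(m-j)) := by ring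
    _ = _ := by rw [hsign]; ring


lemma gessel_chooseD (a r i : ℕ) :
    (a+r).choose r * a.choose i = (r+i).choose i * (a+r).choose (r+i) := by
  by_cases h : i ≤ a
  · have h1 : (a+r).choose r = (a+r).choose a := by
      have := Nat.choose_symm (n := a+r) (k := r) (by omega)
      rw [show a+r-r = a by omega] at this
      exact this.symm
    have h2 : (a+r).choose a * a.choose i = (a+r).choose i * ((a+r)-i).choose (a-i) :=
      Nat.choose_mul h
    have h3 : (a+r).choose (r+i) * (r+i).choose i = (a+r).choose i * ((a+r)-i).choose ((r+i)-i) :=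
      Nat.choose_mul (by omega)
    have h4 : ((a+r)-i).choose (a-i) = ((a+r)-i).choose r := by
      have := Nat.choose_symm (n := (a+r)-i) (k := a-i) (by omega)
      rw [show (a+r)-i-(a-i) = r by omega] at this
      exact this.symm
    rw [h1, h2, h4]
    rw [show (r+i)-i = r by omega] at h3
    rw [← h3]
    exact Nat.mul_comm _ _
  · rw [Nat.choose_eq_zero_of_lt (show a < i by omega),
      Nat.choose_eq_zero_of_lt (show a+r < r+i by omega)]
    ring

lemma gessel_altV (L n r i : ℕ) :
    ∑ k ∈ range (L+r+1), (-1:ℂ)^(L+r-k) * ((L+r).choose k : ℂ) * ((n+k+r).choose r : ℂ) * ((n+k).choose i : ℂ)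
      = if L ≤ i then ((n+r).choose (i-L) : ℂ) * ((i+r).choose r : ℂ) else 0 := by
  have e1 : ∀ k, k ∈ range (L+r+1) →
      (-1:ℂ)^(L+r-k) * ((L+r).choose k : ℂ) * ((n+k+r).choose r : ℂ) * ((n+k).choose i : ℂ)
        = ((r+i).choose i : ℂ) * ((-1:ℂ)^(L+r-k) * ((L+r).choose k : ℂ) * (((n+r)+k).choose (r+i) : ℂ)) := by
    intro k _
    have h := gessel_chooseD (n+k) r i
    have hcast := congrArg (fun z : ℕ => (z : ℂ)) h
    push_cast at hcast
    have h2 : n+k+r = (n+k)+r := by ring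
    have h3 : (n+r)+k = (n+k)+r := by ring
    rw [h2, h3]
    calc (-1:ℂ)^(L+r-k) * ((L+r).choose k : ℂ) * (((n+k)+r).choose r : ℂ) * ((n+k).choose i : ℂ)
        = ((((n+k)+r).choose r : ℂ) * ((n+k).choose i : ℂ)) * ((-1:ℂ)^(L+r-k) * ((L+r).choose k : ℂ)) := by ring
      _ = (((r+i).choose i : ℂ) * (((n+k)+r).choose (r+i) : ℂ)) * ((-1:ℂ)^(L+r-k) * ((L+r).choose k : ℂ)) := by
          rw [hcast]
      _ = _ := by ring
  rw [Finset.sum_congr rfl e1, ← Finset.mul_sum]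
  rw [diff_choose (L+r) (n+r) (r+i)]
  by_cases h : L ≤ i
  · rw [if_pos (show L+r ≤ r+i by omega), if_pos h]
    rw [show r+i-(L+r) = i-L by omega]
    have h4 : ((r+i).choose i : ℂ) = ((i+r).choose r : ℂ) := by
      have := Nat.choose_symm (n := r+i) (k := i) (by omega)
      rw [show r+i-i = r by omega] at this
      rw [← this, show r+i = i+r by ring]
    rw [h4]
    ring
  · rw [if_neg (show ¬ L+r ≤ r+i by omega), if_neg h, mul_zero]




lemma gessel_base (lam x : ℂ) (L n r : ℕ) :
    ∑ k ∈ range (n+r+1), lam^(n+r-k) * ((n+r).choose k : ℂ) * ((L+k+r).choose r : ℂ) * bernPoly (L+k) x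
      = (-1:ℂ)^(L+n+r) *
        ∑ k ∈ range (L+r+1), lam^(L+r-k) * ((L+r).choose k : ℂ) * ((n+k+r).choose r : ℂ)
          * bernPoly (n+k) (1 - lam - x) := by
  have hgdef : ∀ k i : ℕ,
      (-1:ℂ)^(n+k) * lam^(L+r-k) * ((L+r).choose k : ℂ) * ((n+k+r).choose r : ℂ)
        * ((n+k).choose i : ℂ) * bernPoly i x * lam^(n+k-i)
      = (-1:ℂ)^(n+k) * lam^(L+r-k) * ((L+r).choose k : ℂ) * ((n+k+r).choose r : ℂ)
        * ((n+k).choose i : ℂ) * bernPoly i x * lam^(n+k-i) := fun _ _ => rfl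
  -- Step 1: expand each summand of the RHS sum into a double sum
  have step1 : ∀ k, k ∈ range (L+r+1) →
      lam^(L+r-k) * ((L+r).choose k : ℂ) * ((n+k+r).choose r : ℂ) * bernPoly (n+k) (1 - lam - x)
      = ∑ i ∈ range (L+n+r+1),
          (-1:ℂ)^(n+k) * lam^(L+r-k) * ((L+r).choose k : ℂ) * ((n+k+r).choose r : ℂ)
            * ((n+k).choose i : ℂ) * bernPoly i x * lam^(n+k-i) := by
    intro k hk
    rw [mem_range] at hk
    have harg : (1:ℂ) - lam - x = 1 - (x + lam) := by ring
    rw [harg, bernPoly_one_sub, bernPoly_add_eq]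
    rw [Finset.mul_sum, Finset.mul_sum]
    rw [← Finset.sum_subset (show range (n+k+1) ⊆ range (L+n+r+1) by
      apply Finset.range_subset_range.mpr; omega)]
    · apply Finset.sum_congr rfl
      intro i _
      ring
    · intro i _ hni
      rw [mem_range] at hni
      push_neg at hni
      rw [Nat.choose_eq_zero_of_lt (show n+k < i by omega)]
      push_cast
      ring
  rw [Finset.sum_congr rfl step1, Finset.mul_sum]
  have push : ∀ k, k ∈ range (L+r+1) →
      (-1:ℂ)^(L+n+r) * ∑ i ∈ range (L+n+r+1),
          (-1:ℂ)^(n+k) * lam^(L+r-k) * ((L+r).choose k : ℂ) * ((n+k+r).choose r : ℂ)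
            * ((n+k).choose i : ℂ) * bernPoly i x * lam^(n+k-i)
      = ∑ i ∈ range (L+n+r+1), (-1:ℂ)^(L+n+r) *
          ((-1:ℂ)^(n+k) * lam^(L+r-k) * ((L+r).choose k : ℂ) * ((n+k+r).choose r : ℂ)
            * ((n+k).choose i : ℂ) * bernPoly i x * lam^(n+k-i)) :=
    fun k _ => Finset.mul_sum _ _ _
  rw [Finset.sum_congr rfl push, Finset.sum_comm]
  -- Step 2: evaluate the inner k-sums
  have step2 : ∀ i, i ∈ range (L+n+r+1) →
      ∑ k ∈ range (L+r+1), (-1:ℂ)^(L+n+r) *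
        ((-1:ℂ)^(n+k) * lam^(L+r-k) * ((L+r).choose k : ℂ) * ((n+k+r).choose r : ℂ)
          * ((n+k).choose i : ℂ) * bernPoly i x * lam^(n+k-i))
      = (if L ≤ i then ((n+r).choose (i-L) : ℂ) * ((i+r).choose r : ℂ) else 0)
          * (lam^(L+n+r-i) * bernPoly i x) := by
    intro i _
    rw [← gessel_altV L n r i, Finset.sum_mul]
    apply Finset.sum_congr rfl
    intro k hk
    rw [mem_range] at hk
    by_cases hci : i ≤ n+k
    · have hlam : lam^(L+r-k) * lam^(n+k-i) = lam^(L+n+r-i) := by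
        rw [← pow_add]; congr 1; omega
      have hs : (-1:ℂ)^(L+n+r) * (-1:ℂ)^(n+k) = (-1:ℂ)^(L+r-k) := by
        rw [neg_one_pow_sub_ℂ (show k ≤ L+r by omega)]
        rw [← pow_add, ← pow_add]
        rw [neg_one_pow_eq_pow_mod_two, neg_one_pow_eq_pow_mod_two (n := L+r+k)]
        congr 1
        omega
      calc (-1:ℂ)^(L+n+r) * ((-1:ℂ)^(n+k) * lam^(L+r-k) * ((L+r).choose k : ℂ) * ((n+k+r).choose r : ℂ)
            * ((n+k).choose i : ℂ) * bernPoly i x * lam^(n+k-i))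
          = ((-1:ℂ)^(L+n+r) * (-1:ℂ)^(n+k)) * ((L+r).choose k : ℂ) * ((n+k+r).choose r : ℂ)
            * ((n+k).choose i : ℂ) * bernPoly i x * (lam^(L+r-k) * lam^(n+k-i)) := by ring
        _ = _ := by rw [hs, hlam]; ring
    · rw [Nat.choose_eq_zero_of_lt (show n+k < i by omega)]
      push_cast
      ring
  rw [Finset.sum_congr rfl step2]
  -- Step 3: reindex
  rw [← Finset.sum_subset (show Ico L (L+n+r+1) ⊆ range (L+n+r+1) by
    rw [range_eq_Ico]; exact Finset.Ico_subset_Ico (Nat.zero_le _) le_rfl)]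
  · rw [Finset.sum_Ico_eq_sum_range]
    rw [show L+n+r+1-L = n+r+1 by omega]
    apply Finset.sum_congr rfl
    intro t ht
    rw [mem_range] at ht
    rw [if_pos (show L ≤ L+t by omega)]
    rw [show L+t-L = t by omega, show L+t+r = L+t+r from rfl, show L+n+r-(L+t) = n+r-t by omega]
    ring
  · intro i hi hni
    have : ¬ L ≤ i := by
      rw [mem_range] at hi
      rcases Nat.lt_or_ge i L with h | h
      · omega
      · exact absurd (Finset.mem_Ico.mpr ⟨h, by omega⟩) hni
    rw [if_neg this]
    ring


lemma gessel_step (lam u : ℂ) (L n r : ℕ) :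
    (-1:ℂ)^(L+n+r+1) *
      ∑ k ∈ range (L+r+1), lam^(L+r-k) * ((L+r).choose k : ℂ) * ((n+k+r).choose r : ℂ)
        * (((n:ℂ)+(k:ℂ)) * u^(n+k-1))
    = ((r:ℂ)+1) * ∑ j ∈ range (r+2),
        ((n+r).choose j : ℂ) * ((L+r).choose (r+1-j) : ℂ) * (-(u+lam))^(L+j-1) * (-u)^(n+r-j) := by
  have hkey := gessel_keyE n L r u (u+lam)
  rw [show u+lam-u = lam by ring] at hkey
  have hL : ∑ k ∈ range (L+r+1), lam^(L+r-k) * ((L+r).choose k : ℂ) * ((n+k+r).choose r : ℂ)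
        * (((n:ℂ)+(k:ℂ)) * u^(n+k-1))
      = ∑ k ∈ range (L+r+1), lam^(L+r-k) * ((L+r).choose k : ℂ)
          * (((n:ℂ)+(k:ℂ)) * ((n+k+r).choose r : ℂ)) * u^(n+k-1) := by
    apply Finset.sum_congr rfl; intro k _; ring
  rw [hL, hkey]
  rw [mul_left_comm, Finset.mul_sum]
  congr 1
  apply Finset.sum_nbij' (i := fun j => r+1-j) (j := fun j => r+1-j)
  · intro a ha; rw [mem_range] at ha ⊢; omega
  · intro a ha; rw [mem_range] at ha ⊢; omega
  · intro a ha; rw [mem_range] at ha; omega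
  · intro a ha; rw [mem_range] at ha; omega
  · intro j hj
    rw [mem_range] at hj
    rw [show r+1-(r+1-j) = j by omega]
    rw [show L+(r+1-j)-1 = L+r-j by omega]
    rw [show n+r-(r+1-j) = n+j-1 by omega]
    by_cases hz1 : (L+r).choose j = 0
    · rw [hz1]; push_cast; ring
    by_cases hz2 : (n+r).choose (r+1-j) = 0
    · rw [hz2]; push_cast; ring
    have hj1 : j ≤ L+r := by
      by_contra hc; exact hz1 (Nat.choose_eq_zero_of_lt (by omega))
    have hj2 : r+1-j ≤ n+r := by
      by_contra hc; exact hz2 (Nat.choose_eq_zero_of_lt (by omega))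
    have hnj : 1 ≤ n+j := by omega
    rw [neg_pow (u+lam) (L+r-j), neg_pow u (n+j-1)]
    have hsign : (-1:ℂ)^(L+n+r+1) = (-1:ℂ)^(L+r-j) * (-1:ℂ)^(n+j-1) := by
      rw [← pow_add, neg_one_pow_eq_pow_mod_two, neg_one_pow_eq_pow_mod_two (n := L+r-j+(n+j-1))]
      congr 1
      omega
    rw [hsign]
    ring

/-- Corollary (generalization of Gessel's formula to classical Bernoulli polynomials).
A term whose binomial coefficient `C(ℓ+r, r+1-j)` vanishes is zero; this covers the only
case `ℓ = j = 0` where the exponent `ℓ+j-1` would be negative (here `ℓ+j-1` is truncated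
natural subtraction, which is harmless since the corresponding term vanishes). -/
theorem gessel_poly_generalization (lam : ℂ) (ℓ n r s : ℕ) (x : ℂ) :
    (∑ k ∈ Finset.range (n + r + 1),
        lam ^ (n + r - k) * ((n + r).choose k : ℂ) * ((ℓ + k + r).choose r : ℂ) *
          bernPoly (ℓ + k) x) +
      (-1 : ℂ) ^ (ℓ + n + r + 1) *
        ∑ k ∈ Finset.range (ℓ + r + 1),
          lam ^ (ℓ + r - k) * ((ℓ + r).choose k : ℂ) * ((n + k + r).choose r : ℂ) *
            bernPoly (n + k) (1 + (s : ℂ) - lam - x) =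
    ((r : ℂ) + 1) *
      ∑ k ∈ Finset.Icc 1 s, ∑ j ∈ Finset.range (r + 2),
        ((n + r).choose j : ℂ) * ((ℓ + r).choose (r + 1 - j) : ℂ) *
          (x - (k : ℂ)) ^ (ℓ + j - 1) * (x + lam - (k : ℂ)) ^ (n + r - j) := by
  induction s with
  | zero =>
    rw [show Finset.Icc 1 0 = (∅ : Finset ℕ) from Finset.Icc_eq_empty (by omega)]
    rw [Finset.sum_empty, mul_zero]
    have harg : 1 + ((0:ℕ):ℂ) - lam - x = 1 - lam - x := by push_cast; ring
    rw [harg]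
    rw [gessel_base lam x ℓ n r, pow_succ]
    ring
  | succ s ih =>
    have harg : 1 + ((s+1:ℕ):ℂ) - lam - x = (1 + (s:ℂ) - lam - x) + 1 := by push_cast; ring
    rw [harg]
    have hsplit : ∀ k, k ∈ range (ℓ+r+1) →
        lam^(ℓ+r-k) * ((ℓ+r).choose k : ℂ) * ((n+k+r).choose r : ℂ)
            * bernPoly (n+k) ((1 + (s:ℂ) - lam - x) + 1)
        = lam^(ℓ+r-k) * ((ℓ+r).choose k : ℂ) * ((n+k+r).choose r : ℂ)
            * bernPoly (n+k) (1 + (s:ℂ) - lam - x)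
          + lam^(ℓ+r-k) * ((ℓ+r).choose k : ℂ) * ((n+k+r).choose r : ℂ)
            * (((n:ℂ)+(k:ℂ)) * (1 + (s:ℂ) - lam - x)^(n+k-1)) := by
      intro k _
      rw [bernPoly_succ]
      push_cast
      ring
    rw [Finset.sum_congr rfl hsplit, Finset.sum_add_distrib, mul_add, ← add_assoc, ih]
    rw [Finset.sum_Icc_succ_top (show 1 ≤ s+1 by omega), mul_add]
    congr 1
    rw [gessel_step lam (1 + (s:ℂ) - lam - x) ℓ n r]
    congr 1
    apply Finset.sum_congr rfl
    intro j _
    have e1 : -((1 + (s:ℂ) - lam - x) + lam) = x - ((s+1:ℕ):ℂ) := by push_cast; ring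
    have e2 : -(1 + (s:ℂ) - lam - x) = x + lam - ((s+1:ℕ):ℂ) := by push_cast; ring
    rw [e1, e2]
end

section
/- Let m ≥ 1 be an integer and let ℓ, n, r be natural numbers. Then Σ_{k=0}^{n+r} m^{n+r−k} C(n+r,k) C(ℓ+k+r,r) B_{ℓ+k} + (−1)^{ℓ+n+r+1} Σ_{k=0}^{ℓ+r} m^{ℓ+r−k} C(ℓ+r,k) C(n+k+r,r) B_{n+k} = (r+1) Σ_{k=1}^{m−1} Σ_{j=0}^{r+1} (−1)^{ℓ+j−1} C(n+r,j) C(ℓ+r,r+1−j) k^{ℓ+j−1} (m−k)^{n+r−j}, with the convention that a term whose binomial coefficient C(ℓ+r,r+1−j) vanishes is zero (this covers the only case ℓ = j = 0 where the exponent ℓ+j−1 would be negative). -/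
open scoped BigOperators
open Finset

open scoped Nat

namespace Gessel
noncomputable section

/-! ## Two-variable power series infrastructure -/

abbrev R0 : Type := PowerSeries ℚ
abbrev S2 : Type := PowerSeries R0

def mk2 (f : ℕ → ℕ → ℚ) : S2 := PowerSeries.mk fun i => PowerSeries.mk fun j => f i j

def cc (i j : ℕ) (Φ : S2) : ℚ := PowerSeries.coeff j (PowerSeries.coeff i Φ)

@[simp] lemma cc_mk2 (f : ℕ → ℕ → ℚ) (i j : ℕ) : cc i j (mk2 f) = f i j := by simp [cc, mk2]

lemma ext2 {Φ Ψ : S2} (h : ∀ i j, cc i j Φ = cc i j Ψ) : Φ = Ψ := by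
  apply PowerSeries.ext; intro i; apply PowerSeries.ext; intro j; exact h i j

@[simp] lemma cc_add (Φ Ψ : S2) (i j : ℕ) : cc i j (Φ + Ψ) = cc i j Φ + cc i j Ψ := by simp [cc]

@[simp] lemma cc_sub (Φ Ψ : S2) (i j : ℕ) : cc i j (Φ - Ψ) = cc i j Φ - cc i j Ψ := by simp [cc]

lemma cc_sum {γ : Type*} (s : Finset γ) (F : γ → S2) (i j : ℕ) :
    cc i j (∑ x ∈ s, F x) = ∑ x ∈ s, cc i j (F x) := by simp [cc]

lemma cc_mul (Φ Ψ : S2) (α β : ℕ) :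
    cc α β (Φ * Ψ) =
      ∑ i ∈ range (α+1), ∑ j ∈ range (β+1), cc i j Φ * cc (α-i) (β-j) Ψ := by
  unfold cc
  rw [PowerSeries.coeff_mul, Finset.Nat.sum_antidiagonal_eq_sum_range_succ_mk, map_sum]
  refine Finset.sum_congr rfl fun i _ => ?_
  rw [PowerSeries.coeff_mul, Finset.Nat.sum_antidiagonal_eq_sum_range_succ_mk]

/-! ## The exponential series -/

def EE (c d : ℚ) : S2 := mk2 fun i j => c^i * d^j / ((i)! * (j)!)

lemma expconv (c c' : ℚ) (α : ℕ) :
    ∑ i ∈ range (α+1), c^i * c'^(α-i) / ((i)! * (α-i)!) = (c+c')^α / (α)! := by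
  rw [add_pow, Finset.sum_div]
  refine Finset.sum_congr rfl fun i hi => ?_
  rw [Nat.cast_choose ℚ (Nat.lt_succ_iff.mp (Finset.mem_range.mp hi))]
  have h1 : ((i)! : ℚ) ≠ 0 := by positivity
  have h2 : (((α - i))! : ℚ) ≠ 0 := by positivity
  have h3 : ((α)! : ℚ) ≠ 0 := by positivity
  field_simp

lemma EE_mul (c d c' d' : ℚ) : EE c d * EE c' d' = EE (c+c') (d+d') := by
  apply ext2; intro α β
  rw [cc_mul]
  have hw : ∀ i j : ℕ, cc i j (EE c d) * cc (α-i) (β-j) (EE c' d')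
      = (c^i * c'^(α-i) / ((i)! * (α-i)!)) * (d^j * d'^(β-j) / ((j)! * (β-j)!)) := by
    intro i j; simp [EE]; ring
  simp only [hw]
  rw [← Finset.sum_mul_sum, expconv, expconv]
  simp [EE]; ring

/-! ## Bernoulli-type coefficients -/

lemma bern_reflect (j : ℕ) :
    bernoulli j + (if j = 1 then 1 else 0) = (-1 : ℚ)^j * bernoulli j := by
  rcases eq_or_ne j 1 with h | h
  · subst h; simp [bernoulli_one]; norm_num
  · rw [if_neg h, add_zero]
    conv_lhs => rw [bernoulli_eq_bernoulli'_of_ne_one h, bernoulli'_eq_bernoulli]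

def ff (r s : ℕ) : ℚ := if r ≤ s then bernoulli (s-r) / (s-r)! else 0

lemma ff_reflect (r s : ℕ) :
    ff r s + (if s = r+1 then 1 else 0) = (-1 : ℚ)^(s+r) * ff r s := by
  unfold ff
  rcases le_or_gt r s with h | h
  · rw [if_pos h]
    have h2 : (-1 : ℚ)^(s+r) = (-1)^(s-r) := by
      have : s + r = (s - r) + 2*r := by omega
      rw [this, pow_add, pow_mul]; norm_num
    rw [h2]
    have hb := bern_reflect (s - r)
    have hfac : ((s-r)! : ℚ) ≠ 0 := by positivity
    rcases eq_or_ne (s-r) 1 with h1 | h1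
    · rw [h1] at hb ⊢
      rw [if_pos (by omega : s = r+1)]
      simp only [if_pos rfl] at hb
      simp [Nat.factorial_one] at hb ⊢
      linarith [hb]
    · rw [if_neg (by omega : ¬ s = r+1)]
      rw [if_neg h1, add_zero] at hb
      rw [add_zero, ← mul_div_assoc, ← hb]
  · rw [if_neg (by omega : ¬ r ≤ s), if_neg (by omega : ¬ s = r+1)]
    simp

lemma sum_ff (r N : ℕ) :
    ∑ s ∈ range (N+1), ff r s / (N-s)! = (if N = r+1 then 1 else 0) + ff r N := by
  rcases le_or_gt r N with h | h
  · have hsub : ∑ s ∈ range (N+1), ff r s / (N-s)!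
        = ∑ s ∈ Ico r (N+1), ff r s / (N-s)! := by
      refine (Finset.sum_subset ?_ ?_).symm
      · intro x hx; simp only [mem_Ico] at hx; exact mem_range.mpr hx.2
      · intro x hx hx'
        simp only [mem_range] at hx; simp only [mem_Ico, not_and, not_lt] at hx'
        have : ¬ r ≤ x := by omega
        simp [ff, this]
    rw [hsub, Finset.sum_Ico_eq_sum_range]
    have hR : N + 1 - r = (N - r) + 1 := by omega
    rw [hR]
    have hterm : ∀ t ∈ range (N - r + 1),
        ff r (r + t) / (N - (r + t))! = ((N-r).choose t : ℚ) * bernoulli t / (N-r)! := by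
      intro t ht
      simp only [mem_range] at ht
      have ht' : t ≤ N - r := by omega
      simp only [ff, if_pos (by omega : r ≤ r + t), Nat.add_sub_cancel_left]
      have h1 : N - (r + t) = (N - r) - t := by omega
      rw [h1, Nat.cast_choose ℚ ht']
      have f1 : ((t)! : ℚ) ≠ 0 := by positivity
      have f2 : (((N-r) - t)! : ℚ) ≠ 0 := by positivity
      have f3 : (((N-r))! : ℚ) ≠ 0 := by positivity
      field_simp
    rw [Finset.sum_congr rfl hterm, ← Finset.sum_div]
    rw [Finset.sum_range_succ, sum_bernoulli]
    have hNN : ff r N = bernoulli (N - r) / (N-r)! := by simp [ff, if_pos h]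
    have hiff : (N = r+1) ↔ (N - r = 1) := by omega
    rcases eq_or_ne (N - r) 1 with h1 | h1
    · rw [if_pos h1, if_pos (hiff.mpr h1), hNN, h1]
      simp [Nat.factorial_one]
    · rw [if_neg h1, if_neg (hiff.mp.mt h1), hNN]
      simp [Nat.choose_self]
  · have hz : ∀ s ∈ range (N+1), ff r s / (N-s)! = 0 := by
      intro s hs; simp only [mem_range] at hs
      have : ¬ r ≤ s := by omega
      simp [ff, this]
    rw [Finset.sum_congr rfl hz]
    have h1 : ¬ N = r + 1 := by omega
    have h2 : ¬ r ≤ N := by omega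
    simp [ff, h1, h2]

/-! ## Combinatorial lemmas -/

lemma vand (s N α : ℕ) (hs : s ≤ N) :
    ∑ u ∈ range (α+1), ((s.choose u : ℚ) * ((N-s).choose (α-u) : ℚ)) = (N.choose α : ℚ) := by
  have h := Nat.add_choose_eq s (N - s) α
  rw [Nat.add_sub_cancel' hs] at h
  rw [Finset.Nat.sum_antidiagonal_eq_sum_range_succ_mk] at h
  rw [h]; push_cast; rfl

lemma rect_to_diag (α β : ℕ) (F : ℕ → ℕ → ℚ) :
    ∑ i ∈ range (α+1), ∑ j ∈ range (β+1), F i j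
      = ∑ s ∈ range (α+β+1), ∑ u ∈ range (α+1),
          (if u ≤ s ∧ s - u ≤ β then F u (s-u) else 0) := by
  rw [← Finset.sum_product', ← Finset.sum_product']
  rw [← Finset.sum_filter]
  refine Finset.sum_nbij' (fun p => (p.1 + p.2, p.1)) (fun q => (q.2, q.1 - q.2)) ?_ ?_ ?_ ?_ ?_
  · intro p hp
    simp only [mem_product, mem_range] at hp
    simp only [mem_filter, mem_product, mem_range]
    omega
  · intro q hq
    simp only [mem_filter, mem_product, mem_range] at hq
    simp only [mem_product, mem_range]
    omega
  · intro p hp; simp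
  · rintro ⟨s1, u1⟩ hq
    simp only [mem_filter, mem_product, mem_range] at hq
    simp only [Prod.mk.injEq]
    exact ⟨by omega, trivial⟩
  · intro p hp; simp

/-! ## The two key series -/

def F2 (r : ℕ) : S2 := mk2 fun i j => (-1)^j * ((i+j).choose i : ℚ) * ff r (i+j)

def XP (r : ℕ) : S2 := mk2 fun i j => if i+j = r+1 then (-1)^j * ((r+1).choose i : ℚ) else 0

lemma S3 (r : ℕ) : F2 r * EE 1 (-1) = F2 r + XP r := by
  apply ext2; intro α β
  rw [cc_mul]
  have step1 : ∀ i ∈ range (α+1), ∀ j ∈ range (β+1),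
      cc i j (F2 r) * cc (α-i) (β-j) (EE 1 (-1))
        = (fun i j => (-1:ℚ)^β * (ff r (i+j) *
            (((i+j).choose i : ℚ) * ((α+β-(i+j)).choose (α-i) : ℚ) / ((α+β-(i+j)))!))) i j := by
    intro i hi j hj
    simp only [mem_range] at hi hj
    simp only [F2, EE, cc_mk2]
    rw [one_pow]
    have hs : (-1:ℚ)^j * (-1:ℚ)^(β-j) = (-1)^β := by
      rw [← pow_add]; congr 1; omega
    have e2 : (α - i) ≤ α+β-(i+j) := by omega
    have e1 : (α+β-(i+j)) - (α-i) = β - j := by omega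
    have hch : ((α+β-(i+j)).choose (α-i) : ℚ)
        = ((α+β-(i+j)))! / ((α-i)! * ((β-j))!) := by
      rw [Nat.cast_choose ℚ e2, e1]
    rw [hch]
    have f1 : (((α-i))! : ℚ) ≠ 0 := by positivity
    have f2 : (((β-j))! : ℚ) ≠ 0 := by positivity
    have f3 : (((α+β-(i+j)))! : ℚ) ≠ 0 := by positivity
    set c1 := ((i+j).choose i : ℚ) with hc1
    set b1 := ff r (i+j) with hb1
    set N1 := (((α + β - (i + j)))! : ℚ) with hN1
    set d1 := (((α - i))! : ℚ) with hd1
    set d2 := (((β - j))! : ℚ) with hd2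
    set s1 := ((-1 : ℚ))^j with hs1
    set s2 := ((-1 : ℚ))^(β - j) with hs2
    set s3 := ((-1 : ℚ))^β with hs3
    field_simp
    linear_combination (c1 * b1) * hs
  rw [Finset.sum_congr rfl (fun i hi => Finset.sum_congr rfl (fun j hj => step1 i hi j hj))]
  rw [rect_to_diag α β (fun i j => (-1:ℚ)^β * (ff r (i+j) *
      (((i+j).choose i : ℚ) * ((α+β-(i+j)).choose (α-i) : ℚ) / ((α+β-(i+j)))!)))]
  have inner : ∀ s ∈ range (α+β+1),
      (∑ u ∈ range (α+1), (if u ≤ s ∧ s - u ≤ β then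
        (fun i j => (-1:ℚ)^β * (ff r (i+j) *
          (((i+j).choose i : ℚ) * ((α+β-(i+j)).choose (α-i) : ℚ) / ((α+β-(i+j)))!))) u (s-u)
        else 0))
      = (-1:ℚ)^β * ((α+β).choose α : ℚ) * (ff r s / ((α+β-s))!) := by
    intro s hsmem
    simp only [mem_range] at hsmem
    have hsN : s ≤ α + β := by omega
    have hterm : ∀ u ∈ range (α+1),
        (if u ≤ s ∧ s - u ≤ β then
          (fun i j => (-1:ℚ)^β * (ff r (i+j) *
            (((i+j).choose i : ℚ) * ((α+β-(i+j)).choose (α-i) : ℚ) / ((α+β-(i+j)))!))) u (s-u)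
          else 0)
        = ((-1:ℚ)^β * (ff r s / ((α+β-s))!)) * ((s.choose u : ℚ) * (((α+β)-s).choose (α-u) : ℚ)) := by
      intro u hu
      simp only [mem_range] at hu
      by_cases hc : u ≤ s ∧ s - u ≤ β
      · rw [if_pos hc]
        simp only []
        rw [show u + (s - u) = s from by omega]
        ring
      · rw [if_neg hc]
        push_neg at hc
        rcases le_or_gt u s with h1 | h1
        · have h2 : β < s - u := hc h1
          have h3 : (α+β) - s < α - u := by omega
          rw [Nat.choose_eq_zero_of_lt h3]
          simp
        · rw [Nat.choose_eq_zero_of_lt h1]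
          simp
    rw [Finset.sum_congr rfl hterm, ← Finset.mul_sum, vand s (α+β) α hsN]
    ring
  rw [Finset.sum_congr rfl inner, ← Finset.mul_sum, sum_ff]
  simp only [cc_add, F2, XP, cc_mk2]
  split_ifs with h
  · rw [show α + β = r + 1 from h]
    ring
  · ring

lemma F2XP_coeff (r i j : ℕ) :
    cc i j (F2 r + XP r) = (-1:ℚ)^(i+r) * ((i+j).choose i : ℚ) * ff r (i+j) := by
  simp only [cc_add, F2, XP, cc_mk2]
  have hsq : (-1:ℚ)^j * (-1:ℚ)^j = 1 := by
    rw [← pow_add]; exact Even.neg_one_pow ⟨j, by ring⟩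
  have hrefl := ff_reflect r (i+j)
  have hss : (-1:ℚ)^(i+j+r) = (-1:ℚ)^(i+r) * (-1:ℚ)^j := by
    rw [← pow_add]; congr 1; omega
  rw [hss] at hrefl
  split_ifs with h
  · rw [if_pos h] at hrefl
    rw [show ((r+1).choose i : ℚ) = ((i+j).choose i : ℚ) from by rw [← h]]
    linear_combination ((-1:ℚ)^j * ((i+j).choose i : ℚ)) * hrefl +
      ((-1:ℚ)^(i+r) * ((i+j).choose i : ℚ) * ff r (i+j)) * hsq
  · rw [if_neg h, add_zero] at hrefl
    rw [add_zero]
    linear_combination ((-1:ℚ)^j * ((i+j).choose i : ℚ)) * hrefl +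
      ((-1:ℚ)^(i+r) * ((i+j).choose i : ℚ) * ff r (i+j)) * hsq

/-! ## Coefficient extraction lemmas -/

lemma ccF2E (r a b : ℕ) (M : ℚ) :
    cc a b (F2 r * EE M 0)
      = (-1:ℚ)^b * ∑ i ∈ range (a+1),
          ((i+b).choose i : ℚ) * ff r (i+b) * M^(a-i) / ((a-i))! := by
  rw [cc_mul, Finset.mul_sum]
  refine Finset.sum_congr rfl fun i hi => ?_
  rw [Finset.sum_eq_single b]
  · simp only [F2, EE, cc_mk2, Nat.sub_self, pow_zero, Nat.factorial_zero]
    ring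
  · intro j hj hjb
    simp only [mem_range] at hj
    have : (0:ℚ)^(b-j) = 0 := by
      apply zero_pow; omega
    simp only [EE, cc_mk2, this]
    ring
  · intro hb; exact absurd (self_mem_range_succ b) hb

lemma ccF2XPE (r a b : ℕ) (M : ℚ) :
    cc a b ((F2 r + XP r) * EE 0 M)
      = (-1:ℚ)^(a+r) * ∑ j ∈ range (b+1),
          ((a+j).choose a : ℚ) * ff r (a+j) * M^(b-j) / ((b-j))! := by
  rw [cc_mul, Finset.mul_sum]
  rw [Finset.sum_eq_single a]
  · refine Finset.sum_congr rfl fun j hj => ?_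
    rw [F2XP_coeff]
    simp only [EE, cc_mk2, Nat.sub_self, pow_zero, Nat.factorial_zero]
    ring
  · intro i hi hia
    simp only [mem_range] at hi
    have hz : (0:ℚ)^(a-i) = 0 := by apply zero_pow; omega
    refine Finset.sum_eq_zero fun j hj => ?_
    simp only [EE, cc_mk2, hz]
    ring
  · intro ha; exact absurd (self_mem_range_succ a) ha

lemma ccXPE (r a b : ℕ) (c d : ℚ) :
    cc a b (XP r * EE c d)
      = ∑ i ∈ range (r+2),
          (if i ≤ a ∧ r+1-i ≤ b then
            (-1:ℚ)^(r+1-i) * ((r+1).choose i : ℚ) * c^(a-i) * d^(b-(r+1-i))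
              / ((a-i)! * ((b-(r+1-i)))!) else 0) := by
  rw [cc_mul]
  have hw : ∀ i ∈ range (a+1), ∀ j ∈ range (b+1),
      cc i j (XP r) * cc (a-i) (b-j) (EE c d)
        = (if i+j = r+1 then
            (-1:ℚ)^j * ((r+1).choose i : ℚ) * c^(a-i) * d^(b-j) / ((a-i)! * ((b-j))!) else 0) := by
    intro i _ j _
    simp only [XP, EE, cc_mk2, ite_mul, zero_mul]
    split_ifs with h
    · ring
    · rfl
  rw [Finset.sum_congr rfl (fun i hi => Finset.sum_congr rfl (fun j hj => hw i hi j hj))]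
  rw [← Finset.sum_product', ← Finset.sum_filter, ← Finset.sum_filter]
  refine Finset.sum_nbij' (fun p => p.1) (fun i => (i, r+1-i)) ?_ ?_ ?_ ?_ ?_
  · intro p hp
    simp only [mem_filter, mem_product, mem_range] at hp
    simp only [mem_filter, mem_range]
    omega
  · intro i hi
    simp only [mem_filter, mem_range] at hi
    simp only [mem_filter, mem_product, mem_range]
    omega
  · rintro ⟨i, j⟩ hp
    simp only [mem_filter, mem_product, mem_range] at hp
    simp only [Prod.mk.injEq]
    exact ⟨trivial, by omega⟩
  · intro i hi; rfl
  · rintro ⟨i, j⟩ hp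
    simp only [mem_filter, mem_product, mem_range] at hp
    simp only []
    rw [show r + 1 - i = j from by omega]

/-! ## telescoping -/

lemma tele (m : ℕ) :
    (EE 1 (-1) - 1) * (∑ k ∈ range m, EE (k:ℚ) ((m:ℚ) - (k:ℚ)))
      = EE (m:ℚ) 0 - EE 0 (m:ℚ) := by
  have key : ∀ k : ℕ, EE 1 (-1) * EE (k:ℚ) ((m:ℚ) - (k:ℚ))
      = EE ((k+1 : ℕ):ℚ) ((m:ℚ) - ((k+1 : ℕ):ℚ)) := by
    intro k
    rw [EE_mul]
    congr 1 <;> push_cast <;> ring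
  rw [sub_mul, one_mul, Finset.mul_sum]
  rw [Finset.sum_congr rfl (fun k _ => key k)]
  rw [← Finset.sum_sub_distrib]
  rw [Finset.sum_range_sub (f := fun k : ℕ => EE (k:ℚ) ((m:ℚ) - (k:ℚ)))]
  rw [sub_self]
  norm_num

lemma range_split (m : ℕ) (hm : 1 ≤ m) :
    ∑ k ∈ range m, EE (k:ℚ) ((m:ℚ) - (k:ℚ))
      = EE 0 (m:ℚ) + ∑ k ∈ Icc 1 (m-1), EE (k:ℚ) ((m:ℚ) - (k:ℚ)) := by
  have h0 : (0:ℕ) ∈ range m := by simp; omega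
  rw [← Finset.add_sum_erase _ _ h0]
  congr 1
  · norm_num
  · apply Finset.sum_congr _ (fun _ _ => rfl)
    ext x
    simp only [mem_erase, mem_range, mem_Icc]
    omega

lemma main_alg (r m : ℕ) (hm : 1 ≤ m) :
    XP r * (∑ k ∈ Icc 1 (m-1), EE (k:ℚ) ((m:ℚ) - (k:ℚ)))
      = F2 r * EE (m:ℚ) 0 - (F2 r + XP r) * EE 0 (m:ℚ) := by
  have hX : XP r = F2 r * (EE 1 (-1) - 1) := by
    rw [mul_sub, S3, mul_one]; ring
  have hsplit := range_split m hm
  have htele := tele m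
  calc XP r * (∑ k ∈ Icc 1 (m-1), EE (k:ℚ) ((m:ℚ) - (k:ℚ)))
      = XP r * ((∑ k ∈ range m, EE (k:ℚ) ((m:ℚ) - (k:ℚ))) - EE 0 (m:ℚ)) := by
        rw [hsplit]; ring
    _ = F2 r * ((EE 1 (-1) - 1) * (∑ k ∈ range m, EE (k:ℚ) ((m:ℚ) - (k:ℚ)))) - XP r * EE 0 (m:ℚ) := by
        rw [hX]; ring
    _ = F2 r * (EE (m:ℚ) 0 - EE 0 (m:ℚ)) - XP r * EE 0 (m:ℚ) := by rw [htele]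
    _ = F2 r * EE (m:ℚ) 0 - (F2 r + XP r) * EE 0 (m:ℚ) := by ring


lemma h1fin (ℓ n r : ℕ) (M : ℚ) :
    ∑ k ∈ range (n+r+1),
        M^(n+r-k) * ((n+r).choose k : ℚ) * ((ℓ+k+r).choose r : ℚ) * bernoulli (ℓ+k)
      = ((-1:ℚ)^(ℓ+r) * ((n+r)! : ℚ) * ((ℓ+r)! : ℚ) / ((r)! : ℚ)) *
          cc (n+r) (ℓ+r) (F2 r * EE M 0) := by
  rw [ccF2E]
  have hsq : (-1:ℚ)^(ℓ+r) * (-1:ℚ)^(ℓ+r) = 1 := by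
    rw [← pow_add]; exact Even.neg_one_pow ⟨ℓ+r, by ring⟩
  have hc : ((-1:ℚ)^(ℓ+r) * ((n+r)! : ℚ) * ((ℓ+r)! : ℚ) / ((r)! : ℚ)) *
      ((-1:ℚ)^(ℓ+r) * ∑ i ∈ range (n+r+1),
        ((i+(ℓ+r)).choose i : ℚ) * ff r (i+(ℓ+r)) * M^(n+r-i) / ((n+r-i))!)
      = (((n+r)! : ℚ) * ((ℓ+r)! : ℚ) / ((r)! : ℚ)) *
      (∑ i ∈ range (n+r+1),
        ((i+(ℓ+r)).choose i : ℚ) * ff r (i+(ℓ+r)) * M^(n+r-i) / ((n+r-i))!) := by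
    linear_combination (((n+r)! : ℚ) * ((ℓ+r)! : ℚ) / ((r)! : ℚ) *
      (∑ i ∈ range (n+r+1),
        ((i+(ℓ+r)).choose i : ℚ) * ff r (i+(ℓ+r)) * M^(n+r-i) / ((n+r-i))!)) * hsq
  rw [hc, Finset.mul_sum]
  refine Finset.sum_congr rfl fun i hi => ?_
  simp only [mem_range] at hi
  have hi' : i ≤ n + r := by omega
  have hff : ff r (i+(ℓ+r)) = bernoulli (ℓ+i) / ((ℓ+i))! := by
    unfold ff
    rw [if_pos (by omega), show i+(ℓ+r) - r = ℓ+i from by omega]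
  have hc1 : ((n+r).choose i : ℚ) = ((n+r)! : ℚ)/((i)! * ((n+r-i))!) := Nat.cast_choose ℚ hi'
  have hc2 : ((ℓ+i+r).choose r : ℚ) = ((ℓ+i+r)! : ℚ)/((r)! * ((ℓ+i))!) := by
    rw [Nat.cast_choose ℚ (by omega : r ≤ ℓ+i+r), show ℓ+i+r-r = ℓ+i from by omega]
  have hc3 : ((i+(ℓ+r)).choose i : ℚ) = ((ℓ+i+r)! : ℚ)/((i)! * ((ℓ+r))!) := by
    rw [Nat.cast_choose ℚ (by omega : i ≤ i+(ℓ+r)), show i+(ℓ+r)-i = ℓ+r from by omega,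
      show i+(ℓ+r) = ℓ+i+r from by omega]
  rw [hff, hc1, hc2, hc3]
  have f1 : ((i)! : ℚ) ≠ 0 := by positivity
  have f2 : (((n+r-i))! : ℚ) ≠ 0 := by positivity
  have f3 : ((r)! : ℚ) ≠ 0 := by positivity
  have f4 : (((ℓ+i))! : ℚ) ≠ 0 := by positivity
  have f5 : (((ℓ+r))! : ℚ) ≠ 0 := by positivity
  field_simp

lemma h2fin (ℓ n r : ℕ) (M : ℚ) :
    ∑ k ∈ range (ℓ+r+1),
        M^(ℓ+r-k) * ((ℓ+r).choose k : ℚ) * ((n+k+r).choose r : ℚ) * bernoulli (n+k)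
      = ((-1:ℚ)^(ℓ+n+r) * (-1:ℚ)^(ℓ+r) * ((n+r)! : ℚ) * ((ℓ+r)! : ℚ) / ((r)! : ℚ)) *
          cc (n+r) (ℓ+r) ((F2 r + XP r) * EE 0 M) := by
  rw [ccF2XPE]
  have hsq : (-1:ℚ)^(ℓ+n+r) * (-1:ℚ)^(ℓ+r) * (-1:ℚ)^(n+r+r) = 1 := by
    rw [← pow_add, ← pow_add]; exact Even.neg_one_pow ⟨ℓ+n+2*r, by ring⟩
  have hc : ((-1:ℚ)^(ℓ+n+r) * (-1:ℚ)^(ℓ+r) * ((n+r)! : ℚ) * ((ℓ+r)! : ℚ) / ((r)! : ℚ)) *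
      ((-1:ℚ)^(n+r+r) * ∑ j ∈ range (ℓ+r+1),
        (((n+r)+j).choose (n+r) : ℚ) * ff r ((n+r)+j) * M^(ℓ+r-j) / ((ℓ+r-j))!)
      = (((n+r)! : ℚ) * ((ℓ+r)! : ℚ) / ((r)! : ℚ)) *
      (∑ j ∈ range (ℓ+r+1),
        (((n+r)+j).choose (n+r) : ℚ) * ff r ((n+r)+j) * M^(ℓ+r-j) / ((ℓ+r-j))!) := by
    linear_combination (((n+r)! : ℚ) * ((ℓ+r)! : ℚ) / ((r)! : ℚ) *
      (∑ j ∈ range (ℓ+r+1),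
        (((n+r)+j).choose (n+r) : ℚ) * ff r ((n+r)+j) * M^(ℓ+r-j) / ((ℓ+r-j))!)) * hsq
  rw [hc, Finset.mul_sum]
  refine Finset.sum_congr rfl fun j hj => ?_
  simp only [mem_range] at hj
  have hj' : j ≤ ℓ + r := by omega
  have hff : ff r ((n+r)+j) = bernoulli (n+j) / ((n+j))! := by
    unfold ff
    rw [if_pos (by omega), show (n+r)+j - r = n+j from by omega]
  have hc1 : ((ℓ+r).choose j : ℚ) = ((ℓ+r)! : ℚ)/((j)! * ((ℓ+r-j))!) := Nat.cast_choose ℚ hj'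
  have hc2 : ((n+j+r).choose r : ℚ) = ((n+j+r)! : ℚ)/((r)! * ((n+j))!) := by
    rw [Nat.cast_choose ℚ (by omega : r ≤ n+j+r), show n+j+r-r = n+j from by omega]
  have hc3 : (((n+r)+j).choose (n+r) : ℚ) = ((n+j+r)! : ℚ)/(((n+r))! * ((j))!) := by
    rw [Nat.cast_choose ℚ (by omega : n+r ≤ (n+r)+j), show (n+r)+j-(n+r) = j from by omega,
      show (n+r)+j = n+j+r from by omega]
  rw [hff, hc1, hc2, hc3]
  have f1 : ((j)! : ℚ) ≠ 0 := by positivity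
  have f2 : (((ℓ+r-j))! : ℚ) ≠ 0 := by positivity
  have f3 : ((r)! : ℚ) ≠ 0 := by positivity
  have f4 : (((n+j))! : ℚ) ≠ 0 := by positivity
  have f5 : (((n+r))! : ℚ) ≠ 0 := by positivity
  field_simp

lemma rhs_term (ℓ n r : ℕ) (c d : ℚ) (i : ℕ) (hi2 : i < r + 2) :
    ((-1:ℚ)^(ℓ+r) * ((n+r)! : ℚ) * ((ℓ+r)! : ℚ) / ((r)! : ℚ)) *
      (if i ≤ n+r ∧ r+1-i ≤ ℓ+r then
        (-1:ℚ)^(r+1-i) * ((r+1).choose i : ℚ) * c^(n+r-i) * d^(ℓ+r-(r+1-i))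
          / ((n+r-i)! * ((ℓ+r-(r+1-i)))!) else 0)
    = ((r:ℚ)+1) * ((-1:ℚ)^(ℓ+i-1) * ((n+r).choose i : ℚ) * ((ℓ+r).choose (r+1-i) : ℚ)
        * d^(ℓ+i-1) * c^(n+r-i)) := by
  split_ifs with h
  · obtain ⟨h1, h2⟩ := h
    have hli : 1 ≤ ℓ + i := by omega
    have hir : i ≤ r + 1 := by omega
    clear hi2
    have he : ℓ+r-(r+1-i) = ℓ+i-1 := by omega
    have hsign : (-1:ℚ)^(ℓ+r) * (-1:ℚ)^(r+1-i) = (-1:ℚ)^(ℓ+i-1) := by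
      rw [← pow_add, show (ℓ+r)+(r+1-i) = (ℓ+i-1) + 2*(r+1-i) from by omega,
        pow_add, pow_mul]
      norm_num
    have hc1 : (((r+1)).choose i : ℚ) = (((r+1))! : ℚ)/((i)! * ((r+1-i))!) :=
      Nat.cast_choose ℚ hir
    have hc2 : ((n+r).choose i : ℚ) = ((n+r)! : ℚ)/((i)! * ((n+r-i))!) := Nat.cast_choose ℚ h1
    have hc3 : ((ℓ+r).choose (r+1-i) : ℚ) = ((ℓ+r)! : ℚ)/(((r+1-i))! * ((ℓ+i-1))!) := by
      rw [Nat.cast_choose ℚ h2, he]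
    have hfs : (((r+1))! : ℚ) = ((r:ℚ)+1) * ((r)! : ℚ) := by
      rw [Nat.factorial_succ]; push_cast; ring
    rw [he, hc1, hc2, hc3, hfs, ← hsign]
    have f1 : ((i)! : ℚ) ≠ 0 := by positivity
    have f2 : (((n+r-i))! : ℚ) ≠ 0 := by positivity
    have f3 : ((r)! : ℚ) ≠ 0 := by positivity
    have f4 : (((r+1-i))! : ℚ) ≠ 0 := by positivity
    have f5 : (((ℓ+i-1))! : ℚ) ≠ 0 := by positivity
    field_simp
  · push_neg at h
    rcases le_or_gt i (n+r) with h1 | h1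
    · have h2 : ℓ + r < r+1-i := h h1
      rw [Nat.choose_eq_zero_of_lt h2]
      push_cast; ring
    · rw [Nat.choose_eq_zero_of_lt h1]
      push_cast; ring

lemma icc_reflect (m : ℕ) (hm : 1 ≤ m) (f : ℕ → ℚ) :
    ∑ k ∈ Icc 1 (m-1), f k = ∑ k ∈ Icc 1 (m-1), f (m-k) := by
  refine Finset.sum_nbij' (fun k => m - k) (fun k => m - k) ?_ ?_ ?_ ?_ ?_
  · intro k hk; simp only [mem_Icc] at *; omega
  · intro k hk; simp only [mem_Icc] at *; omega
  · intro k hk; simp only [mem_Icc] at hk; show m - (m - k) = k; omega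
  · intro k hk; simp only [mem_Icc] at hk; show m - (m - k) = k; omega
  · intro k hk; simp only [mem_Icc] at hk
    show f k = f (m - (m - k))
    rw [show m - (m - k) = k from by omega]

theorem gessel_main (m : ℕ) (hm : 1 ≤ m) (ℓ n r : ℕ) :
    (∑ k ∈ Finset.range (n + r + 1),
        (m : ℚ) ^ (n + r - k) * ((n + r).choose k : ℚ) * ((ℓ + k + r).choose r : ℚ) *
          bernoulli (ℓ + k)) +
      (-1 : ℚ) ^ (ℓ + n + r + 1) *
        ∑ k ∈ Finset.range (ℓ + r + 1),
          (m : ℚ) ^ (ℓ + r - k) * ((ℓ + r).choose k : ℚ) * ((n + k + r).choose r : ℚ) *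
            bernoulli (n + k) =
    ((r : ℚ) + 1) *
      ∑ k ∈ Finset.Icc 1 (m - 1), ∑ j ∈ Finset.range (r + 2),
        (-1 : ℚ) ^ (ℓ + j - 1) * ((n + r).choose j : ℚ) * ((ℓ + r).choose (r + 1 - j) : ℚ) *
          (k : ℚ) ^ (ℓ + j - 1) * ((m : ℚ) - (k : ℚ)) ^ (n + r - j) := by
  have KEY := main_alg r m hm
  rw [h1fin ℓ n r (m:ℚ), h2fin ℓ n r (m:ℚ)]
  set C0 : ℚ := ((-1:ℚ)^(ℓ+r) * ((n+r)! : ℚ) * ((ℓ+r)! : ℚ) / ((r)! : ℚ)) with hC0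
  have hsgn : (-1:ℚ)^(ℓ+n+r+1) * ((-1:ℚ)^(ℓ+n+r) * (-1:ℚ)^(ℓ+r) * ((n+r)! : ℚ) *
      ((ℓ+r)! : ℚ) / ((r)! : ℚ)) = -C0 := by
    rw [hC0]
    have : (-1:ℚ)^(ℓ+n+r+1) * (-1:ℚ)^(ℓ+n+r) = -1 := by
      rw [← pow_add, show (ℓ+n+r+1)+(ℓ+n+r) = 2*(ℓ+n+r)+1 from by omega, pow_succ, pow_mul]
      norm_num
    linear_combination ((-1:ℚ)^(ℓ+r) * ((n+r)! : ℚ) * ((ℓ+r)! : ℚ) / ((r)! : ℚ)) * this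
  calc C0 * cc (n+r) (ℓ+r) (F2 r * EE (m:ℚ) 0) +
        (-1:ℚ)^(ℓ+n+r+1) * (((-1:ℚ)^(ℓ+n+r) * (-1:ℚ)^(ℓ+r) * ((n+r)! : ℚ) *
          ((ℓ+r)! : ℚ) / ((r)! : ℚ)) * cc (n+r) (ℓ+r) ((F2 r + XP r) * EE 0 (m:ℚ)))
      = C0 * (cc (n+r) (ℓ+r) (F2 r * EE (m:ℚ) 0)
          - cc (n+r) (ℓ+r) ((F2 r + XP r) * EE 0 (m:ℚ))) := by
        rw [← mul_assoc ((-1:ℚ)^(ℓ+n+r+1)), hsgn]; ring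
    _ = C0 * cc (n+r) (ℓ+r) (XP r * (∑ k ∈ Icc 1 (m-1), EE (k:ℚ) ((m:ℚ) - (k:ℚ)))) := by
        rw [KEY, cc_sub]
    _ = ∑ k ∈ Icc 1 (m-1), C0 * cc (n+r) (ℓ+r) (XP r * EE (k:ℚ) ((m:ℚ) - (k:ℚ))) := by
        rw [Finset.mul_sum (f := fun k : ℕ => EE (k:ℚ) ((m:ℚ) - (k:ℚ))), cc_sum,
          Finset.mul_sum]
    _ = ∑ k ∈ Icc 1 (m-1), ((r:ℚ)+1) * ∑ j ∈ range (r+2),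
          (-1:ℚ)^(ℓ+j-1) * ((n+r).choose j : ℚ) * ((ℓ+r).choose (r+1-j) : ℚ) *
            ((m:ℚ) - (k:ℚ))^(ℓ+j-1) * (k:ℚ)^(n+r-j) := by
        refine Finset.sum_congr rfl fun k hk => ?_
        rw [ccXPE, Finset.mul_sum, Finset.mul_sum]
        refine Finset.sum_congr rfl fun i hi => ?_
        rw [rhs_term ℓ n r (k:ℚ) ((m:ℚ) - (k:ℚ)) i (mem_range.mp hi)]
    _ = ((r:ℚ)+1) * ∑ k ∈ Icc 1 (m-1), ∑ j ∈ range (r+2),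
          (-1:ℚ)^(ℓ+j-1) * ((n+r).choose j : ℚ) * ((ℓ+r).choose (r+1-j) : ℚ) *
            (k:ℚ)^(ℓ+j-1) * ((m:ℚ) - (k:ℚ))^(n+r-j) := by
        rw [Finset.mul_sum]
        rw [icc_reflect m hm (fun k => ((r:ℚ)+1) * ∑ j ∈ range (r+2),
          (-1:ℚ)^(ℓ+j-1) * ((n+r).choose j : ℚ) * ((ℓ+r).choose (r+1-j) : ℚ) *
            (k:ℚ)^(ℓ+j-1) * ((m:ℚ) - (k:ℚ))^(n+r-j))]
        refine Finset.sum_congr rfl fun k hk => ?_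
        simp only [mem_Icc] at hk
        have hk1 : k ≤ m := by omega
        have hcast : ((m - k : ℕ) : ℚ) = (m:ℚ) - (k:ℚ) := by
          push_cast [Nat.cast_sub hk1]; ring
        congr 1
        refine Finset.sum_congr rfl fun j hj => ?_
        rw [hcast, show (m:ℚ) - ((m:ℚ) - (k:ℚ)) = (k:ℚ) from by ring]

end
end Gessel


/-- Gessel's identity (2013): for an integer `m ≥ 1` and `ℓ, n, r ∈ ℕ`,
`S_{n,ℓ,r}^{(1)}(m,0,0) = (r+1) ∑_{k=1}^{m-1} ∑_{j=0}^{r+1} (-1)^{ℓ+j-1}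
C(n+r,j) C(ℓ+r,r+1-j) k^{ℓ+j-1} (m-k)^{n+r-j}`.
Terms whose binomial coefficient `C(ℓ+r,r+1-j)` vanishes are zero; this covers the only
case `ℓ = j = 0` where the exponent `ℓ+j-1` would be negative (here truncated
natural subtraction is used, which is harmless since the corresponding term vanishes). -/
theorem gessel_identity (m : ℕ) (hm : 1 ≤ m) (ℓ n r : ℕ) :
    (∑ k ∈ Finset.range (n + r + 1),
        (m : ℚ) ^ (n + r - k) * ((n + r).choose k : ℚ) * ((ℓ + k + r).choose r : ℚ) *
          bernoulli (ℓ + k)) +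
      (-1 : ℚ) ^ (ℓ + n + r + 1) *
        ∑ k ∈ Finset.range (ℓ + r + 1),
          (m : ℚ) ^ (ℓ + r - k) * ((ℓ + r).choose k : ℚ) * ((n + k + r).choose r : ℚ) *
            bernoulli (n + k) =
    ((r : ℚ) + 1) *
      ∑ k ∈ Finset.Icc 1 (m - 1), ∑ j ∈ Finset.range (r + 2),
        (-1 : ℚ) ^ (ℓ + j - 1) * ((n + r).choose j : ℚ) * ((ℓ + r).choose (r + 1 - j) : ℚ) *
          (k : ℚ) ^ (ℓ + j - 1) * ((m : ℚ) - (k : ℚ)) ^ (n + r - j) := by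
  exact Gessel.gessel_main m hm ℓ n r
end

section
/- Let m ≥ 1 be an integer, n a natural number, and r an odd natural number. Then Σ_{k=0}^{n+r} m^{n+r−k} C(n+r,k) C(n+k+r,r) B_{n+k} = (1/2)(r+1) Σ_{k=1}^{m−1} Σ_{j=0}^{r+1} C(n+r,j) C(n+r,r+1−j) k^{j+n−1} (k−m)^{n+r−j}, with the convention that a term whose binomial coefficient C(n+r,r+1−j) vanishes is zero (this covers the only case n = j = 0 where the exponent j+n−1 would be negative). -/
open scoped BigOperators
open Finset

namespace GesselAux

open Polynomial

/-! Auxiliary development: the "umbral" evaluation `Phi` sending `∑ aₜ Xᵗ` to `∑ aₜ Bₜ`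
(Bernoulli numbers), and its behaviour under translation and reflection. -/

noncomputable def phiF : ℕ → ℚ → ℚ := fun t a => a * _root_.bernoulli t

lemma phiF_zero (t : ℕ) : phiF t 0 = 0 := zero_mul _

noncomputable def Phi : ℚ[X] →+ ℚ where
  toFun p := p.sum phiF
  map_zero' := Polynomial.sum_zero_index phiF
  map_add' p q := Polynomial.sum_add_index p q phiF (fun _ => zero_mul _)
    (fun _ a b => add_mul a b _)

lemma Phi_monomial (t : ℕ) (a : ℚ) : Phi (monomial t a) = a * _root_.bernoulli t :=
  Polynomial.sum_monomial_index a phiF (phiF_zero t)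

lemma Phi_eq_sum_range {p : ℚ[X]} {d : ℕ} (h : p.natDegree < d) :
    Phi p = ∑ t ∈ range d, p.coeff t * _root_.bernoulli t :=
  Polynomial.sum_over_range' p phiF_zero d h

lemma bernoulli_odd (t : ℕ) (h1 : Odd t) (h2 : 1 < t) : _root_.bernoulli t = 0 := by
  rw [_root_.bernoulli, bernoulli'_eq_zero_of_odd h1 h2, mul_zero]

lemma Phi_comp_add_one (p : ℚ[X]) :
    Phi (p.comp (X + C 1)) = Phi p + (derivative p).eval 0 := by
  induction p using Polynomial.induction_on' with
  | add p q hp hq => simp only [add_comp, derivative_add, eval_add, map_add, hp, hq]; ring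
  | monomial t a =>
    rw [← C_mul_X_pow_eq_monomial, mul_comp, C_comp, pow_comp, X_comp]
    have hdeg : (C a * (X + C 1) ^ t).natDegree < t + 1 := by
      calc (C a * (X + C 1) ^ t).natDegree ≤ ((X + C (1:ℚ)) ^ t).natDegree :=
            natDegree_C_mul_le a _
        _ ≤ t := natDegree_pow_le.trans (by rw [natDegree_X_add_C]; omega)
        _ < t + 1 := Nat.lt_succ_self t
    rw [Phi_eq_sum_range hdeg, C_mul_X_pow_eq_monomial, Phi_monomial, derivative_monomial,
      eval_monomial]
    have hco : ∀ i, (C a * (X + C 1) ^ t).coeff i = a * (t.choose i : ℚ) := by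
      intro i; rw [coeff_C_mul, C_1, coeff_X_add_one_pow]
    simp only [hco]
    rw [sum_range_succ]
    have : ∑ i ∈ range t, a * (t.choose i : ℚ) * _root_.bernoulli i
        = a * ((if t = 1 then (1:ℚ) else 0)) := by
      rw [← _root_.sum_bernoulli t, mul_sum]; apply sum_congr rfl; intros; ring
    rw [this, Nat.choose_self]
    rcases t with _ | t
    · simp
    · rcases t with _ | t
      · norm_num; ring
      · have : (0:ℚ) ^ (t + 2 - 1) = 0 := by
          rw [zero_pow]; omega
        simp [this]

lemma Phi_reflect (p : ℚ[X]) : Phi p - Phi (p.comp (-X)) = -(p.coeff 1) := by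
  induction p using Polynomial.induction_on' with
  | add p q hp hq =>
    simp only [add_comp, map_add, coeff_add, neg_add]
    rw [← hp, ← hq]; ring
  | monomial t a =>
    have h : (monomial t a : ℚ[X]).comp (-X) = monomial t ((-1:ℚ)^t * a) := by
      rw [← C_mul_X_pow_eq_monomial, mul_comp, C_comp, pow_comp, X_comp, neg_pow,
        ← C_mul_X_pow_eq_monomial, map_mul]
      have : ((-1 : ℚ[X]) ^ t) = C ((-1:ℚ)^t) := by rw [map_pow, map_neg, map_one]
      rw [this]; ring
    rw [h, Phi_monomial, Phi_monomial, coeff_monomial]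
    rcases Nat.even_or_odd t with he | ho
    · have ht : t ≠ 1 := fun hh => by rw [hh] at he; have := Nat.even_iff.mp he; omega
      rw [he.neg_one_pow, if_neg ht]; ring
    · rw [ho.neg_one_pow]
      rcases eq_or_ne t 1 with rfl | hne
      · rw [if_pos rfl, _root_.bernoulli_one]; ring
      · rw [bernoulli_odd t ho (by rcases ho with ⟨w,rfl⟩; omega), if_neg hne]
        ring

lemma deriv_comp_translate (p : ℚ[X]) (c : ℚ) :
    derivative (p.comp (X + C c)) = (derivative p).comp (X + C c) := by
  rw [derivative_comp, derivative_add, derivative_X, derivative_C, add_zero, one_mul]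

lemma iter_deriv_comp_translate (k : ℕ) (p : ℚ[X]) (c : ℚ) :
    derivative^[k] (p.comp (X + C c)) = (derivative^[k] p).comp (X + C c) := by
  induction k with
  | zero => rfl
  | succ k ih =>
    rw [Function.iterate_succ_apply', ih, deriv_comp_translate,
      Function.iterate_succ_apply' derivative k p]

lemma deriv_comp_reflect (p : ℚ[X]) (c : ℚ) :
    derivative (p.comp (C c - X)) = -((derivative p).comp (C c - X)) := by
  rw [derivative_comp, derivative_sub, derivative_X, derivative_C, zero_sub, neg_one_mul]

lemma iter_deriv_comp_reflect (k : ℕ) (p : ℚ[X]) (c : ℚ) :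
    derivative^[k] (p.comp (C c - X)) = C ((-1:ℚ)^k) * ((derivative^[k] p).comp (C c - X)) := by
  induction k with
  | zero => simp
  | succ k ih =>
    rw [Function.iterate_succ_apply', ih, derivative_C_mul, deriv_comp_reflect,
      Function.iterate_succ_apply' derivative k p, pow_succ]
    simp only [map_mul, map_neg, map_one]
    ring

lemma telescope (p : ℚ[X]) (M : ℕ) :
    ∑ k ∈ range M, (derivative p).eval (k : ℚ)
      = Phi (p.comp (X + C (M : ℚ))) - Phi p := by
  induction M with
  | zero => simp
  | succ M ih =>
    have hcomp : p.comp (X + C ((M:ℚ)+1)) = (p.comp (X + C (M:ℚ))).comp (X + C 1) := by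
      rw [comp_assoc]
      congr 1
      rw [add_comp, X_comp, C_comp]
      rw [map_add]; ring
    rw [sum_range_succ, ih, Nat.cast_succ, hcomp, Phi_comp_add_one, deriv_comp_translate,
      eval_comp]
    simp only [eval_add, eval_X, eval_C, zero_add]
    ring

lemma stepA (n r : ℕ) (μ : ℚ) :
    Phi (derivative^[r] ((X + C μ)^(n+r) * X^(n+r)))
      = (r.factorial : ℚ) * ∑ k ∈ range (n+r+1),
          μ^(n+r-k) * ((n+r).choose k : ℚ) * ((n+k+r).choose r : ℚ)
            * _root_.bernoulli (n+k) := by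
  have hexp : (X + C μ)^(n+r) * X^(n+r)
      = ∑ k ∈ range (n+r+1), C (((n+r).choose k : ℚ) * μ^(n+r-k)) * X^(n+r+k) := by
    rw [add_pow, sum_mul]
    refine sum_congr rfl fun k hk => ?_
    rw [map_mul, map_pow, ← C_eq_natCast]
    ring
  rw [hexp, iterate_derivative_sum, map_sum, mul_sum]
  refine sum_congr rfl fun k hk => ?_
  rw [iterate_derivative_C_mul, iterate_derivative_X_pow_eq_C_mul, ← mul_assoc, ← map_mul,
    C_mul_X_pow_eq_monomial, Phi_monomial]
  have he : n + r + k - r = n + k := by omega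
  have hc : n + r + k = n + k + r := by ring
  rw [he, hc, Nat.descFactorial_eq_factorial_mul_choose]
  push_cast
  ring

/-- The inner sum appearing on the right-hand side of the main identity. -/
def Qs (n r : ℕ) (μ x : ℚ) : ℚ :=
  ∑ j ∈ range (r + 2),
    ((n + r).choose j : ℚ) * ((n + r).choose (r + 1 - j) : ℚ) *
      x ^ (j + n - 1) * (x - μ) ^ (n + r - j)

lemma stepB (n r : ℕ) (μ x : ℚ) :
    (derivative^[r+1] ((X:ℚ[X])^(n+r) * (X - C μ)^(n+r))).eval x
      = (((r+1).factorial : ℚ)) * Qs n r μ x := by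
  unfold Qs
  rw [iterate_derivative_mul, eval_finset_sum, mul_sum]
  refine sum_congr rfl fun j hj => ?_
  have hj' : j ≤ r + 1 := by simpa [Nat.lt_succ_iff] using hj
  rw [iterate_derivative_X_pow_eq_C_mul, iterate_derivative_X_sub_pow]
  have e1 : n + r - (r + 1 - j) = j + n - 1 := by omega
  rw [e1]
  have hfact : (((r+1).choose j : ℚ)) * (j.factorial : ℚ) * ((r+1-j).factorial : ℚ)
      = ((r+1).factorial : ℚ) := by
    exact_mod_cast congrArg (Nat.cast : ℕ → ℚ)
      (Nat.choose_mul_factorial_mul_factorial hj')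
  simp only [nsmul_eq_mul, eval_mul, eval_natCast, eval_C, eval_pow, eval_X,
    eval_sub]
  rw [Nat.descFactorial_eq_factorial_mul_choose, Nat.descFactorial_eq_factorial_mul_choose]
  push_cast
  linear_combination (((n+r).choose j : ℚ) * ((n+r).choose (r+1-j) : ℚ)
    * x^(j+n-1) * (x-μ)^(n+r-j)) * hfact

lemma Hsym (N : ℕ) (μ : ℚ) :
    ((X:ℚ[X])^N * (X - C μ)^N).comp (C μ - X) = (X:ℚ[X])^N * (X - C μ)^N := by
  rw [mul_comp, pow_comp, pow_comp, X_comp, sub_comp, X_comp, C_comp]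
  have h2 : (C μ - X - C μ : ℚ[X]) = -X := by ring
  have h1 : (C μ - X : ℚ[X]) = -(X - C μ) := by ring
  rw [h2, h1, ← mul_pow, neg_mul_neg, mul_pow]
  ring

/-- Main identity, stated inside the auxiliary namespace. -/
theorem main (m : ℕ) (hm : 1 ≤ m) (n r : ℕ) (hr : Odd r) :
    ∑ k ∈ Finset.range (n + r + 1),
        (m : ℚ) ^ (n + r - k) * ((n + r).choose k : ℚ) * ((n + k + r).choose r : ℚ) *
          _root_.bernoulli (n + k) =
    (1 / 2 : ℚ) * ((r : ℚ) + 1) *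
      ∑ k ∈ Finset.Icc 1 (m - 1), ∑ j ∈ Finset.range (r + 2),
        ((n + r).choose j : ℚ) * ((n + r).choose (r + 1 - j) : ℚ) *
          (k : ℚ) ^ (j + n - 1) * ((k : ℚ) - (m : ℚ)) ^ (n + r - j) := by
  have hEqQ : ∀ k : ℕ,
      (∑ j ∈ Finset.range (r + 2),
        ((n + r).choose j : ℚ) * ((n + r).choose (r + 1 - j) : ℚ) *
          (k : ℚ) ^ (j + n - 1) * ((k : ℚ) - (m : ℚ)) ^ (n + r - j))
      = Qs n r (m:ℚ) (k:ℚ) := fun k => rfl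
  simp only [hEqQ]
  set H : ℚ[X] := (X:ℚ[X])^(n+r) * (X - C (m:ℚ))^(n+r) with hH
  set P : ℚ[X] := derivative^[r] H with hP
  have hHm : H.comp (X + C (m:ℚ)) = (X + C (m:ℚ))^(n+r) * X^(n+r) := by
    rw [hH, mul_comp, pow_comp, pow_comp, X_comp, sub_comp, X_comp, C_comp]
    have h0 : (X + C (m:ℚ) - C (m:ℚ) : ℚ[X]) = X := by ring
    rw [h0]
  have hA : Phi (P.comp (X + C (m:ℚ)))
      = (r.factorial : ℚ) * ∑ k ∈ Finset.range (n + r + 1),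
          (m : ℚ) ^ (n + r - k) * ((n + r).choose k : ℚ) * ((n + k + r).choose r : ℚ) *
            _root_.bernoulli (n + k) := by
    rw [hP, ← iter_deriv_comp_translate, hHm]
    exact stepA n r (m:ℚ)
  have hPsym : P = -(P.comp (C (m:ℚ) - X)) := by
    have h := iter_deriv_comp_reflect r H (m:ℚ)
    rw [show H.comp (C (m:ℚ) - X) = H by rw [hH]; exact Hsym (n+r) (m:ℚ), ← hP] at h
    conv_lhs => rw [h]
    rw [hr.neg_one_pow, map_neg, map_one, neg_one_mul]
  have hPmneg : P.comp (X + C (m:ℚ)) = -(P.comp (-X)) := by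
    conv_lhs => rw [hPsym]
    have hq : (C (m:ℚ) - X).comp (X + C (m:ℚ)) = -X := by
      rw [sub_comp, C_comp, X_comp]; ring
    rw [neg_comp, comp_assoc, hq]
  have hPc : Phi P = -(P.coeff 1) - Phi (P.comp (X + C (m:ℚ))) := by
    have h4 := Phi_reflect P
    rw [show P.comp (-X) = -(P.comp (X + C (m:ℚ))) by rw [hPmneg, neg_neg], map_neg] at h4
    linarith
  have htel := telescope P m
  have hQ : ∀ x : ℚ, (derivative P).eval x = ((r+1).factorial : ℚ) * Qs n r (m:ℚ) x := by
    intro x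
    rw [hP, ← Function.iterate_succ_apply' derivative r H, hH]
    exact stepB n r (m:ℚ) x
  have hQ0 : ((r+1).factorial : ℚ) * Qs n r (m:ℚ) 0 = P.coeff 1 := by
    rw [← hQ 0, ← coeff_zero_eq_eval_zero, coeff_derivative]
    push_cast
    ring
  have hsum : ((r+1).factorial : ℚ) * (∑ k ∈ range m, Qs n r (m:ℚ) (k:ℚ))
      = Phi (P.comp (X + C (m:ℚ))) - Phi P := by
    rw [mul_sum, ← htel]
    exact sum_congr rfl fun k _ => (hQ (k:ℚ)).symm
  have hsplit : ∑ k ∈ range m, Qs n r (m:ℚ) (k:ℚ)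
      = Qs n r (m:ℚ) 0 + ∑ k ∈ Finset.Icc 1 (m-1), Qs n r (m:ℚ) (k:ℚ) := by
    have h1 : Finset.Icc 1 (m-1) = Finset.Ico 1 m := by
      rw [← Finset.Ico_add_one_right_eq_Icc]
      congr 1
      omega
    rw [h1, range_eq_Ico, ← Finset.sum_Ico_consecutive _ (Nat.zero_le 1) hm]
    congr 1
    rw [show Finset.Ico 0 1 = range 1 from by rw [range_eq_Ico], sum_range_one]
    norm_num
  have hkey : ((r+1).factorial : ℚ) * (∑ k ∈ Finset.Icc 1 (m-1), Qs n r (m:ℚ) (k:ℚ))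
      = 2 * Phi (P.comp (X + C (m:ℚ))) := by
    rw [hsplit, mul_add, hQ0, hPc] at hsum
    linarith
  have hfac : ((r+1).factorial : ℚ) = ((r:ℚ)+1) * (r.factorial : ℚ) := by
    rw [Nat.factorial_succ]; push_cast; ring
  have hrfne : (r.factorial : ℚ) ≠ 0 := by
    exact_mod_cast Nat.factorial_ne_zero r
  rw [hA, hfac] at hkey
  have hL2 : ((r:ℚ)+1) * (∑ k ∈ Finset.Icc 1 (m-1), Qs n r (m:ℚ) (k:ℚ))
      = 2 * (∑ k ∈ Finset.range (n + r + 1),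
          (m : ℚ) ^ (n + r - k) * ((n + r).choose k : ℚ) * ((n + k + r).choose r : ℚ) *
            _root_.bernoulli (n + k)) := by
    apply mul_left_cancel₀ hrfne
    linear_combination hkey
  linear_combination (-(1/2) : ℚ) * hL2

end GesselAux

/-- Gessel's explicit formula for `S_{n,n,r}^{(1)}(m,0,0)` with `r` odd:
`∑_{k=0}^{n+r} m^{n+r-k} C(n+r,k) C(n+k+r,r) B_{n+k}
 = (1/2)(r+1) ∑_{k=1}^{m-1} ∑_{j=0}^{r+1} C(n+r,j) C(n+r,r+1-j) k^{j+n-1} (k-m)^{n+r-j}`.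
Terms whose binomial coefficient `C(n+r,r+1-j)` vanishes are zero; this covers the only
case `n = j = 0` where the exponent `j+n-1` would be negative (here truncated natural
subtraction is used, which is harmless since the corresponding term vanishes). -/
theorem gessel_symmetric_identity (m : ℕ) (hm : 1 ≤ m) (n r : ℕ) (hr : Odd r) :
    ∑ k ∈ Finset.range (n + r + 1),
        (m : ℚ) ^ (n + r - k) * ((n + r).choose k : ℚ) * ((n + k + r).choose r : ℚ) *
          bernoulli (n + k) =
    (1 / 2 : ℚ) * ((r : ℚ) + 1) *
      ∑ k ∈ Finset.Icc 1 (m - 1), ∑ j ∈ Finset.range (r + 2),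
        ((n + r).choose j : ℚ) * ((n + r).choose (r + 1 - j) : ℚ) *
          (k : ℚ) ^ (j + n - 1) * ((k : ℚ) - (m : ℚ)) ^ (n + r - j) :=
  GesselAux.main m hm n r hr
end

section
/- Let α, β ∈ ℂ and let ℓ, n, m, r be natural numbers. Then the following identity holds in ℂ[X]: Σ_{k=0}^{n+r} (m−2β)^{n+r−k} C(n+r,k) C(ℓ+k+r,r) B_{ℓ+k}^{(α)}(X+β) − Σ_{k=0}^{ℓ+r} (−1)^{r+ℓ+k} (m−2β)^{ℓ+r−k} C(ℓ+r,k) C(n+k+r,r) B_{n+k}^{(α)}(X−β+m−1) = Ω_{α−1}( (1/r!) · (d/dX)^{r+1} [ (X+β−1)^{ℓ+r} (X−β+m−1)^{n+r} ] ), where B_j^{(α)}(X+c) denotes the polynomial B_j^{(α)} composed with the polynomial X+c. -/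
open scoped BigOperators
open Polynomial Finset

noncomputable section

/-- The formal power series `(e^t - 1)/t` over `ℂ` (constant term `1`). -/
def expSub1DivT : PowerSeries ℂ := PowerSeries.mk fun n => ((n + 1).factorial : ℂ)⁻¹

/-- The formal power series `t/(e^t - 1)` over `ℂ`. -/
def bernoulliBase : PowerSeries ℂ := expSub1DivT⁻¹

/-- The formal logarithm of a power series with constant term `1`:
`log F = ∑_{k ≥ 1} (-1)^(k+1) (F-1)^k / k`, computed coefficientwise
(only the terms with `k ≤ n` contribute to the `n`-th coefficient). -/
def formalLog (F : PowerSeries ℂ) : PowerSeries ℂ :=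
  PowerSeries.mk fun n =>
    ∑ k ∈ Finset.range (n + 1),
      (-1 : ℂ) ^ (k + 1) * (k : ℂ)⁻¹ * PowerSeries.coeff n ((F - 1) ^ k)

/-- The formal exponential of a power series with zero constant term:
`exp H = ∑_{k ≥ 0} H^k / k!`, computed coefficientwise. -/
def formalExp (H : PowerSeries ℂ) : PowerSeries ℂ :=
  PowerSeries.mk fun n =>
    ∑ k ∈ Finset.range (n + 1), ((k.factorial : ℂ))⁻¹ * PowerSeries.coeff n (H ^ k)

/-- `(t/(e^t - 1))^α := exp (α • log (t/(e^t - 1)))`. -/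
def bernoulliBasePow (α : ℂ) : PowerSeries ℂ := formalExp (α • formalLog bernoulliBase)

/-- The generalized Bernoulli numbers `B_n^{(α)}`, defined by
`∑ B_n^{(α)} t^n / n! = (t/(e^t-1))^α`. -/
def genBernoulliNumber (α : ℂ) (n : ℕ) : ℂ :=
  (n.factorial : ℂ) * PowerSeries.coeff n (bernoulliBasePow α)

/-- The generalized Bernoulli polynomials `B_n^{(α)}(x)`, defined by
`∑ B_n^{(α)}(x) t^n / n! = (t/(e^t-1))^α e^{t x}`; equivalently
`B_n^{(α)}(x) = ∑_{k ≤ n} C(n,k) B_k^{(α)} x^{n-k}`. -/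
def genBernoulliPoly (α : ℂ) (n : ℕ) : Polynomial ℂ :=
  ∑ k ∈ Finset.range (n + 1),
    Polynomial.C ((n.choose k : ℂ) * genBernoulliNumber α k) * Polynomial.X ^ (n - k)

/-- `Ω_γ`: the unique `ℂ`-linear endomorphism of `ℂ[X]` with `Ω_γ (X^n) = B_n^{(γ)}(X)`. -/
def OmegaOp (γ : ℂ) (P : Polynomial ℂ) : Polynomial ℂ :=
  P.sum fun n a => Polynomial.C a * genBernoulliPoly γ n

end

noncomputable section PSpart

local notation "dd" => PowerSeries.derivative ℂ
local notation "cf" => PowerSeries.coeff (R := ℂ)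
local notation "cc" => PowerSeries.constantCoeff (R := ℂ)

lemma coeff_pow_zero_of_lt {H : PowerSeries ℂ} (h : cc H = 0) :
    ∀ {k n : ℕ}, n < k → cf n (H ^ k) = 0 := by
  intro k
  induction k with
  | zero => exact fun hn => absurd hn (Nat.not_lt_zero _)
  | succ k ih =>
    intro n hn
    rw [pow_succ', PowerSeries.coeff_mul]
    apply Finset.sum_eq_zero
    rintro ⟨p, q⟩ hpq
    rw [Finset.HasAntidiagonal.mem_antidiagonal] at hpq
    rcases Nat.eq_zero_or_pos p with hp | hp
    · subst hp
      simp only [PowerSeries.coeff_zero_eq_constantCoeff, h, zero_mul]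
    · rw [ih (show q < k by omega), mul_zero]

lemma coeff_mul_congr_left {A B C : PowerSeries ℂ} {n : ℕ}
    (h : ∀ i ≤ n, cf i A = cf i B) :
    cf n (A * C) = cf n (B * C) := by
  rw [PowerSeries.coeff_mul, PowerSeries.coeff_mul]
  refine Finset.sum_congr rfl ?_
  rintro ⟨p, q⟩ hpq
  rw [Finset.HasAntidiagonal.mem_antidiagonal] at hpq
  rw [h p (by omega)]

lemma coeff_formalExp {H : PowerSeries ℂ} (h : cc H = 0) {n N : ℕ} (hN : n < N) :
    cf n (formalExp H) =
      ∑ k ∈ Finset.range N, ((k.factorial : ℂ))⁻¹ * cf n (H ^ k) := by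
  rw [formalExp, PowerSeries.coeff_mk]
  apply Finset.sum_subset
  · exact Finset.range_subset_range.2 hN
  · intro k hk hk'
    simp only [Finset.mem_range, not_lt] at hk'
    rw [coeff_pow_zero_of_lt h (by omega), mul_zero]

lemma constantCoeff_formalExp (H : PowerSeries ℂ) : cc (formalExp H) = 1 := by
  rw [← PowerSeries.coeff_zero_eq_constantCoeff_apply]
  rw [formalExp, PowerSeries.coeff_mk]
  simp

lemma constantCoeff_formalLog (F : PowerSeries ℂ) : cc (formalLog F) = 0 := by
  rw [← PowerSeries.coeff_zero_eq_constantCoeff_apply]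
  rw [formalLog, PowerSeries.coeff_mk]
  simp

lemma derivative_formalExp {H : PowerSeries ℂ} (h : cc H = 0) :
    dd (formalExp H) = dd H * formalExp H := by
  ext n
  rw [PowerSeries.coeff_derivative, coeff_formalExp h (show n + 1 < n + 2 by omega)]
  rw [mul_comm (dd H) (formalExp H)]
  have hagree : ∀ i ≤ n, cf i (formalExp H)
      = cf i (∑ k ∈ Finset.range (n + 1), ((k.factorial : ℂ))⁻¹ • H ^ k) := by
    intro i hi
    rw [coeff_formalExp h (show i < n + 1 by omega), map_sum]
    simp [PowerSeries.coeff_smul]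
  rw [coeff_mul_congr_left hagree]
  have hterm : ∀ k ∈ Finset.range (n + 1),
      cf n ((((k.factorial : ℂ))⁻¹ • H ^ k) * dd H)
        = (((k+1).factorial : ℂ))⁻¹ * cf (n + 1) (H ^ (k + 1)) * ((n : ℂ) + 1) := by
    intro k _
    have hd : dd (H ^ (k + 1)) = ((k : ℕ) + 1) • (H ^ k * dd H) := by
      rw [Derivation.leibniz_pow]
      simp only [Nat.add_sub_cancel, smul_eq_mul]
    have hcd : cf (n + 1) (H ^ (k + 1)) * ((n : ℂ) + 1)
        = ((k : ℂ) + 1) * cf n (H ^ k * dd H) := by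
      have h2 := congrArg (cf n) hd
      rw [PowerSeries.coeff_derivative] at h2
      rw [h2, map_nsmul, nsmul_eq_mul]
      push_cast
      ring
    rw [smul_mul_assoc, PowerSeries.coeff_smul, smul_eq_mul]
    have hk1 : ((k : ℂ) + 1) ≠ 0 := Nat.cast_add_one_ne_zero k
    have hf0 : (k.factorial : ℂ) ≠ 0 := Nat.cast_ne_zero.2 (Nat.factorial_ne_zero k)
    have hfact : (((k+1).factorial : ℂ)) = ((k : ℂ) + 1) * (k.factorial : ℂ) := by
      rw [Nat.factorial_succ]; push_cast; ring
    have e : cf n (H ^ k * dd H) = ((k : ℂ)+1)⁻¹ * (cf (n+1) (H ^ (k+1)) * ((n : ℂ)+1)) := by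
      rw [hcd, inv_mul_cancel_left₀ hk1]
    rw [e, hfact, mul_inv]
    ring
  have hRHS : cf n ((∑ k ∈ Finset.range (n+1), ((k.factorial : ℂ))⁻¹ • H ^ k) * dd H)
      = ∑ k ∈ Finset.range (n+1),
          (((k+1).factorial : ℂ))⁻¹ * cf (n+1) (H ^ (k+1)) * ((n : ℂ)+1) := by
    rw [Finset.sum_mul, map_sum]
    exact Finset.sum_congr rfl hterm
  rw [hRHS]
  rw [Finset.sum_range_succ' (fun k => ((k.factorial : ℂ))⁻¹ * cf (n+1) (H ^ k)) (n + 1)]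
  simp [PowerSeries.coeff_one, add_mul, Finset.sum_mul]

lemma ode_unique {H E₁ E₂ : PowerSeries ℂ}
    (h1 : dd E₁ = dd H * E₁) (h2 : dd E₂ = dd H * E₂)
    (h0 : cc E₁ = cc E₂) : E₁ = E₂ := by
  ext n
  induction n using Nat.strong_induction_on with
  | _ n ih =>
    match n with
    | 0 =>
      simpa only [PowerSeries.coeff_zero_eq_constantCoeff] using h0
    | (m+1) =>
      have e1 := congrArg (cf m) h1
      have e2 := congrArg (cf m) h2
      rw [PowerSeries.coeff_derivative] at e1 e2
      have hsum : cf m (dd H * E₁) = cf m (dd H * E₂) := by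
        rw [PowerSeries.coeff_mul, PowerSeries.coeff_mul]
        refine Finset.sum_congr rfl ?_
        rintro ⟨p, q⟩ hpq
        rw [Finset.HasAntidiagonal.mem_antidiagonal] at hpq
        rw [ih q (by omega)]
      have hm : ((m : ℂ) + 1) ≠ 0 := Nat.cast_add_one_ne_zero m
      have : cf (m+1) E₁ * ((m : ℂ) + 1) = cf (m+1) E₂ * ((m : ℂ) + 1) := by
        rw [e1, e2, hsum]
      exact mul_right_cancel₀ hm this

lemma formalExp_add {A B : PowerSeries ℂ} (hA : cc A = 0) (hB : cc B = 0) :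
    formalExp (A + B) = formalExp A * formalExp B := by
  have hAB : cc (A + B) = 0 := by rw [map_add, hA, hB, add_zero]
  refine ode_unique (H := A + B) (derivative_formalExp hAB) ?_ ?_
  · rw [map_add]
    have lz : dd (formalExp A * formalExp B) =
        formalExp A * dd (formalExp B) + formalExp B * dd (formalExp A) := by
      rw [Derivation.leibniz]
      simp [smul_eq_mul]
    rw [lz, derivative_formalExp hA, derivative_formalExp hB]
    ring
  · simp [constantCoeff_formalExp]

lemma coeff_formalLog (F : PowerSeries ℂ) (n : ℕ) :
    cf n (formalLog F) = ∑ k ∈ Finset.range (n + 1),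
      (-1 : ℂ) ^ (k + 1) * (k : ℂ)⁻¹ * cf n ((F - 1) ^ k) := by
  rw [formalLog, PowerSeries.coeff_mk]

lemma derivative_formalLog {F : PowerSeries ℂ} (h : cc F = 1) :
    dd F = dd (formalLog F) * F := by
  obtain ⟨G, hG⟩ : ∃ G : PowerSeries ℂ, G = F - 1 := ⟨F - 1, rfl⟩
  have hG0 : cc G = 0 := by rw [hG, map_sub, h, map_one, sub_self]
  have hdG : dd G = dd F := by
    rw [hG, map_sub, Derivation.map_one_eq_zero, sub_zero]
  ext n
  have hvan : ∀ i j : ℕ, i < j → cf i ((-G) ^ j * dd G) = 0 := by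
    intro i j hij
    rw [PowerSeries.coeff_mul]
    apply Finset.sum_eq_zero
    rintro ⟨p, q⟩ hpq
    rw [Finset.HasAntidiagonal.mem_antidiagonal] at hpq
    rw [coeff_pow_zero_of_lt (by rw [map_neg, hG0, neg_zero]) (show p < j by omega), zero_mul]
  have key : ∀ i ≤ n, cf i (dd (formalLog F))
      = cf i ((∑ j ∈ Finset.range (n + 1), (-G) ^ j) * dd G) := by
    intro i hi
    rw [PowerSeries.coeff_derivative, coeff_formalLog]
    simp only [← hG]
    have hterm : ∀ k ∈ Finset.range (i + 2),
        (-1 : ℂ) ^ (k + 1) * (k : ℂ)⁻¹ * cf (i+1) (G ^ k) * ((i : ℂ) + 1)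
          = if k = 0 then 0 else cf i ((-G) ^ (k - 1) * dd G) := by
      intro k _
      rcases k with _ | j
      · norm_num
      ·
        simp only [Nat.add_sub_cancel, if_neg (Nat.succ_ne_zero j)]
        have hd : dd (G ^ (j + 1)) = ((j : ℕ) + 1) • (G ^ j * dd G) := by
          rw [Derivation.leibniz_pow]
          simp only [Nat.add_sub_cancel, smul_eq_mul]
        have hcd : cf (i + 1) (G ^ (j + 1)) * ((i : ℂ) + 1)
            = ((j : ℂ) + 1) * cf i (G ^ j * dd G) := by
          have h2 := congrArg (cf i) hd
          rw [PowerSeries.coeff_derivative] at h2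
          rw [h2, map_nsmul, nsmul_eq_mul]
          push_cast
          ring
        have hj1 : ((j : ℂ) + 1) ≠ 0 := Nat.cast_add_one_ne_zero j
        have hng : (-G) ^ j * dd G = ((-1 : ℂ) ^ j) • (G ^ j * dd G) := by
          rw [PowerSeries.smul_eq_C_mul, map_pow, map_neg, map_one, neg_pow, mul_assoc]
        rw [hng, PowerSeries.coeff_smul, smul_eq_mul]
        have e : cf i (G ^ j * dd G)
            = ((j : ℂ)+1)⁻¹ * (cf (i+1) (G ^ (j+1)) * ((i : ℂ)+1)) := by
          rw [hcd, inv_mul_cancel_left₀ hj1]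
        rw [e]
        push_cast
        have hne : ((j : ℂ) + 1)⁻¹ ≠ 0 := inv_ne_zero hj1
        field_simp
        ring
    rw [Finset.sum_mul, Finset.sum_congr rfl hterm,
      Finset.sum_range_succ' (fun k => if k = 0 then (0:ℂ) else cf i ((-G) ^ (k - 1) * dd G)) (i+1)]
    simp only [Nat.succ_ne_zero, if_false, if_true, ite_true, ite_false, Nat.add_sub_cancel,
      add_zero, eq_self_iff_true]
    rw [Finset.sum_mul, map_sum]
    apply Finset.sum_subset (Finset.range_subset_range.2 (by omega))
    intro j hj hj'
    simp only [Finset.mem_range, not_lt] at hj'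
    exact hvan i j (by omega)
  rw [← hdG, coeff_mul_congr_left key]
  have geom : (∑ j ∈ Finset.range (n+1), (-G)^j) * F = 1 - (-G)^(n+1) := by
    have hg := geom_sum_mul (-G) (n+1)
    have hF : (-G) - 1 = -F := by rw [hG]; ring
    rw [hF] at hg
    linear_combination -hg
  have hfin : (∑ j ∈ Finset.range (n+1), (-G)^j) * dd G * F
      = dd G - (-G)^(n+1) * dd G := by
    rw [mul_right_comm, geom]; ring
  rw [hfin, map_sub, hvan n (n+1) (by omega), sub_zero]

lemma formalExp_formalLog {F : PowerSeries ℂ} (h : cc F = 1) :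
    formalExp (formalLog F) = F := by
  refine ode_unique (H := formalLog F)
    (derivative_formalExp (constantCoeff_formalLog F)) (derivative_formalLog h) ?_
  rw [constantCoeff_formalExp, h]

lemma constantCoeff_smul_formalLog (a : ℂ) (F : PowerSeries ℂ) :
    cc (a • formalLog F) = 0 := by
  rw [PowerSeries.smul_eq_C_mul, map_mul, PowerSeries.constantCoeff_C,
    constantCoeff_formalLog, mul_zero]

lemma bernoulliBasePow_add (α γ : ℂ) :
    bernoulliBasePow (α + γ) = bernoulliBasePow α * bernoulliBasePow γ := by
  rw [bernoulliBasePow, bernoulliBasePow, bernoulliBasePow, add_smul]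
  exact formalExp_add (constantCoeff_smul_formalLog _ _) (constantCoeff_smul_formalLog _ _)

lemma constantCoeff_expSub1DivT : cc expSub1DivT = 1 := by
  rw [← PowerSeries.coeff_zero_eq_constantCoeff_apply, expSub1DivT, PowerSeries.coeff_mk]
  norm_num

lemma constantCoeff_bernoulliBase : cc bernoulliBase = 1 := by
  rw [bernoulliBase, PowerSeries.constantCoeff_inv, constantCoeff_expSub1DivT, inv_one]

lemma bernoulliBasePow_one : bernoulliBasePow 1 = bernoulliBase := by
  rw [bernoulliBasePow, one_smul]
  exact formalExp_formalLog constantCoeff_bernoulliBase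

lemma bernoulliBase_mul : bernoulliBase * expSub1DivT = 1 := by
  rw [bernoulliBase]
  exact PowerSeries.inv_mul_cancel _ (by rw [constantCoeff_expSub1DivT]; exact one_ne_zero)

lemma bernoulliBasePow_sub_one (α : ℂ) :
    bernoulliBasePow (α - 1) = bernoulliBasePow α * expSub1DivT := by
  have h1 : bernoulliBasePow (α - 1) * bernoulliBase = bernoulliBasePow α := by
    rw [← bernoulliBasePow_one, ← bernoulliBasePow_add]
    norm_num
  calc bernoulliBasePow (α-1)
      = bernoulliBasePow (α-1) * (bernoulliBase * expSub1DivT) := by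
        rw [bernoulliBase_mul, mul_one]
    _ = bernoulliBasePow α * expSub1DivT := by rw [← mul_assoc, h1]

lemma coeff_bernoulliBasePow_sub_one (α : ℂ) (t : ℕ) :
    cf t (bernoulliBasePow (α - 1)) =
      ∑ x ∈ Finset.HasAntidiagonal.antidiagonal t,
        cf x.1 (bernoulliBasePow α) * ((x.2 + 1).factorial : ℂ)⁻¹ := by
  rw [bernoulliBasePow_sub_one, PowerSeries.coeff_mul]
  refine Finset.sum_congr rfl ?_
  rintro ⟨p, q⟩ _
  rw [expSub1DivT, PowerSeries.coeff_mk]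

end PSpart

noncomputable section PolyPart

open Polynomial

local notation "cfc" => PowerSeries.coeff (R := ℂ)

lemma OmegaOp_zero (γ : ℂ) : OmegaOp γ 0 = 0 := Polynomial.sum_zero_index _

lemma OmegaOp_add (γ : ℂ) (p q : Polynomial ℂ) :
    OmegaOp γ (p + q) = OmegaOp γ p + OmegaOp γ q :=
  Polynomial.sum_add_index p q _ (fun _ => by simp) (fun _ b₁ b₂ => by rw [map_add, add_mul])

lemma OmegaOp_monomial (γ : ℂ) (n : ℕ) (a : ℂ) :
    OmegaOp γ (Polynomial.monomial n a) = Polynomial.C a * genBernoulliPoly γ n :=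
  Polynomial.sum_monomial_index a _ (by simp)

lemma OmegaOp_C_mul_X_pow (γ : ℂ) (n : ℕ) (a : ℂ) :
    OmegaOp γ (Polynomial.C a * Polynomial.X ^ n) = Polynomial.C a * genBernoulliPoly γ n := by
  rw [Polynomial.C_mul_X_pow_eq_monomial]
  exact OmegaOp_monomial γ n a

lemma OmegaOp_X_pow (γ : ℂ) (n : ℕ) :
    OmegaOp γ (Polynomial.X ^ n) = genBernoulliPoly γ n := by
  simpa using OmegaOp_C_mul_X_pow γ n 1

lemma OmegaOp_sum {ι : Type*} (γ : ℂ) (s : Finset ι) (f : ι → Polynomial ℂ) :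
    OmegaOp γ (∑ i ∈ s, f i) = ∑ i ∈ s, OmegaOp γ (f i) := by
  induction s using Finset.cons_induction with
  | empty => simp [OmegaOp_zero]
  | cons a s ha ih => rw [Finset.sum_cons, OmegaOp_add, ih, Finset.sum_cons]

lemma OmegaOp_smul (γ : ℂ) (c : ℂ) (p : Polynomial ℂ) :
    OmegaOp γ (c • p) = c • OmegaOp γ p := by
  have hd : (c • p).natDegree < p.natDegree + 1 :=
    lt_of_le_of_lt (Polynomial.natDegree_smul_le c p) (Nat.lt_succ_self _)
  rw [Polynomial.as_sum_range' (c • p) (p.natDegree + 1) hd, OmegaOp_sum]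
  conv_rhs => rw [Polynomial.as_sum_range' p (p.natDegree + 1) (Nat.lt_succ_self _), OmegaOp_sum]
  rw [Finset.smul_sum]
  refine Finset.sum_congr rfl fun i _ => ?_
  rw [Polynomial.coeff_smul, OmegaOp_monomial, OmegaOp_monomial, smul_eq_mul, map_mul,
    Polynomial.smul_eq_C_mul, mul_assoc]

lemma OmegaOp_C_mul (γ : ℂ) (c : ℂ) (p : Polynomial ℂ) :
    OmegaOp γ (Polynomial.C c * p) = Polynomial.C c * OmegaOp γ p := by
  rw [← Polynomial.smul_eq_C_mul, ← Polynomial.smul_eq_C_mul]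
  exact OmegaOp_smul γ c p

lemma omega_monomial_sum (γ a : ℂ) (i : ℕ) {N : ℕ} (h : i < N) :
    Polynomial.C a * genBernoulliPoly γ i
      = ∑ j ∈ Finset.range N, Polynomial.C (cfc j (bernoulliBasePow γ)) *
          Polynomial.derivative^[j] (Polynomial.C a * Polynomial.X ^ i) := by
  have main : ∀ j ∈ Finset.range (i + 1),
      Polynomial.C a *
          (Polynomial.C ((i.choose j : ℂ) * genBernoulliNumber γ j) * Polynomial.X ^ (i - j))
        = Polynomial.C (cfc j (bernoulliBasePow γ)) *
            Polynomial.derivative^[j] (Polynomial.C a * Polynomial.X ^ i) := by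
    intro j hj
    rw [Polynomial.iterate_derivative_C_mul, Polynomial.iterate_derivative_X_pow_eq_smul,
      Polynomial.smul_eq_C_mul, genBernoulliNumber, Nat.descFactorial_eq_factorial_mul_choose]
    push_cast
    simp only [map_mul]
    ring
  calc Polynomial.C a * genBernoulliPoly γ i
      = ∑ j ∈ Finset.range (i + 1), Polynomial.C a *
          (Polynomial.C ((i.choose j : ℂ) * genBernoulliNumber γ j) *
            Polynomial.X ^ (i - j)) := by
        rw [genBernoulliPoly, Finset.mul_sum]
    _ = ∑ j ∈ Finset.range (i + 1), Polynomial.C (cfc j (bernoulliBasePow γ)) *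
          Polynomial.derivative^[j] (Polynomial.C a * Polynomial.X ^ i) :=
        Finset.sum_congr rfl main
    _ = ∑ j ∈ Finset.range N, Polynomial.C (cfc j (bernoulliBasePow γ)) *
          Polynomial.derivative^[j] (Polynomial.C a * Polynomial.X ^ i) := by
        apply Finset.sum_subset (Finset.range_subset_range.2 (by omega))
        intro j hj hj'
        simp only [Finset.mem_range, not_lt] at hj'
        rw [Polynomial.iterate_derivative_C_mul, Polynomial.iterate_derivative_X_pow_eq_smul]
        simp [Nat.descFactorial_eq_zero_iff_lt.2 (show i < j by omega)]

lemma OmegaOp_eq_sum (γ : ℂ) (P : Polynomial ℂ) {N : ℕ} (hN : P.natDegree < N) :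
    OmegaOp γ P = ∑ j ∈ Finset.range N,
      Polynomial.C (cfc j (bernoulliBasePow γ)) * Polynomial.derivative^[j] P := by
  conv_lhs => rw [Polynomial.as_sum_range' P N hN]
  conv_rhs => rw [Polynomial.as_sum_range' P N hN]
  rw [OmegaOp_sum]
  have hr : ∀ j ∈ Finset.range N,
      Polynomial.C (cfc j (bernoulliBasePow γ)) *
          Polynomial.derivative^[j] (∑ i ∈ Finset.range N, Polynomial.monomial i (P.coeff i))
        = ∑ i ∈ Finset.range N, Polynomial.C (cfc j (bernoulliBasePow γ)) *
            Polynomial.derivative^[j] (Polynomial.monomial i (P.coeff i)) := by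
    intro j _
    rw [Polynomial.iterate_derivative_sum, Finset.mul_sum]
  rw [Finset.sum_congr rfl hr, Finset.sum_comm]
  refine Finset.sum_congr rfl fun i hi => ?_
  rw [Finset.mem_range] at hi
  rw [OmegaOp_monomial, ← Polynomial.C_mul_X_pow_eq_monomial]
  exact omega_monomial_sum γ (P.coeff i) i hi

lemma iterate_derivative_comp_X_add_C (k : ℕ) (P : Polynomial ℂ) (a : ℂ) :
    Polynomial.derivative^[k] (P.comp (Polynomial.X + Polynomial.C a))
      = (Polynomial.derivative^[k] P).comp (Polynomial.X + Polynomial.C a) := by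
  induction k generalizing P with
  | zero => rfl
  | succ k ih =>
    rw [Function.iterate_succ_apply, Function.iterate_succ_apply]
    rw [Polynomial.derivative_comp]
    simp only [Polynomial.derivative_add, Polynomial.derivative_X, Polynomial.derivative_C,
      add_zero, one_mul]
    exact ih (Polynomial.derivative P)

lemma taylor_shift (P : Polynomial ℂ) {N : ℕ} (hN : P.natDegree < N) :
    P.comp (Polynomial.X + Polynomial.C 1)
      = ∑ s ∈ Finset.range N, ((s.factorial : ℂ))⁻¹ • Polynomial.derivative^[s] P := by
  conv_lhs => rw [Polynomial.as_sum_range' P N hN]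
  conv_rhs => rw [Polynomial.as_sum_range' P N hN]
  have hr : ∀ s ∈ Finset.range N,
      ((s.factorial : ℂ))⁻¹ •
          Polynomial.derivative^[s] (∑ i ∈ Finset.range N, Polynomial.monomial i (P.coeff i))
        = ∑ i ∈ Finset.range N, ((s.factorial : ℂ))⁻¹ •
            Polynomial.derivative^[s] (Polynomial.monomial i (P.coeff i)) := by
    intro s _
    rw [Polynomial.iterate_derivative_sum, Finset.smul_sum]
  rw [Finset.sum_congr rfl hr, Finset.sum_comm, Polynomial.sum_comp]
  refine Finset.sum_congr rfl fun i hi => ?_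
  rw [Finset.mem_range] at hi
  -- monomial case
  rw [← Polynomial.C_mul_X_pow_eq_monomial, Polynomial.mul_comp, Polynomial.C_comp,
    Polynomial.pow_comp, Polynomial.X_comp]
  have hbin : ((Polynomial.X + Polynomial.C 1 : Polynomial ℂ)) ^ i
      = ∑ k ∈ Finset.range (i + 1),
          Polynomial.C ((i.choose k : ℂ)) * Polynomial.X ^ k := by
    rw [add_pow]
    refine Finset.sum_congr rfl fun k hk => ?_
    simp only [map_one, one_pow, mul_one, Polynomial.C_eq_natCast]
    ring
  rw [hbin, Finset.mul_sum]
  have hterm : ∀ s ∈ Finset.range (i + 1),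
      ((s.factorial : ℂ))⁻¹ •
          Polynomial.derivative^[s] (Polynomial.C (P.coeff i) * Polynomial.X ^ i)
        = Polynomial.C (P.coeff i) * (Polynomial.C ((i.choose s : ℂ)) * Polynomial.X ^ (i - s)) := by
    intro s hs
    rw [Polynomial.iterate_derivative_C_mul, Polynomial.iterate_derivative_X_pow_eq_smul,
      Polynomial.smul_eq_C_mul, Polynomial.smul_eq_C_mul,
      Nat.descFactorial_eq_factorial_mul_choose]
    have hf0 : (s.factorial : ℂ) ≠ 0 := Nat.cast_ne_zero.2 (Nat.factorial_ne_zero s)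
    push_cast
    simp only [map_mul]
    have hs1 : (Polynomial.C ((s.factorial : ℂ))⁻¹) * Polynomial.C ((s.factorial : ℂ)) = 1 := by
      rw [← map_mul, inv_mul_cancel₀ hf0, map_one]
    linear_combination (Polynomial.C (P.coeff i) * Polynomial.C ((i.choose s : ℂ)) *
      Polynomial.X ^ (i - s)) * hs1
  calc ∑ k ∈ Finset.range (i + 1),
        Polynomial.C (P.coeff i) * (Polynomial.C ((i.choose k : ℂ)) * Polynomial.X ^ k)
      = ∑ s ∈ Finset.range (i + 1),
          Polynomial.C (P.coeff i) * (Polynomial.C ((i.choose s : ℂ)) * Polynomial.X ^ (i - s)) := by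
        conv_rhs => rw [← Finset.sum_range_reflect]
        refine Finset.sum_congr rfl fun k hk => ?_
        rw [Finset.mem_range] at hk
        have e1 : i + 1 - 1 - k = i - k := by omega
        have e2 : i - (i - k) = k := by omega
        rw [e1, e2, Nat.choose_symm (show k ≤ i by omega)]
    _ = ∑ s ∈ Finset.range (i + 1), ((s.factorial : ℂ))⁻¹ •
          Polynomial.derivative^[s] (Polynomial.C (P.coeff i) * Polynomial.X ^ i) := by
        refine Finset.sum_congr rfl fun s hs => (hterm s hs).symm
    _ = ∑ s ∈ Finset.range N, ((s.factorial : ℂ))⁻¹ •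
          Polynomial.derivative^[s] (Polynomial.C (P.coeff i) * Polynomial.X ^ i) := by
        apply Finset.sum_subset (Finset.range_subset_range.2 (by omega))
        intro s hs hs'
        simp only [Finset.mem_range, not_lt] at hs'
        rw [Polynomial.iterate_derivative_C_mul, Polynomial.iterate_derivative_X_pow_eq_smul]
        simp [Nat.descFactorial_eq_zero_iff_lt.2 (show i < s by omega)]

lemma OmegaOp_X_add_C_pow (γ a : ℂ) (k : ℕ) :
    OmegaOp γ ((Polynomial.X + Polynomial.C a) ^ k)
      = (genBernoulliPoly γ k).comp (Polynomial.X + Polynomial.C a) := by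
  have hcomp : ((Polynomial.X + Polynomial.C a : Polynomial ℂ)) ^ k
      = (Polynomial.X ^ k).comp (Polynomial.X + Polynomial.C a) := by
    rw [Polynomial.pow_comp, Polynomial.X_comp]
  have hdeg : (((Polynomial.X + Polynomial.C a : Polynomial ℂ)) ^ k).natDegree < k + 1 := by
    rw [Polynomial.natDegree_pow, Polynomial.natDegree_X_add_C]; omega
  have hdeg2 : ((Polynomial.X ^ k : Polynomial ℂ)).natDegree < k + 1 := by
    rw [Polynomial.natDegree_X_pow]; omega
  rw [OmegaOp_eq_sum γ _ hdeg, ← OmegaOp_X_pow γ k, OmegaOp_eq_sum γ _ hdeg2,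
    Polynomial.sum_comp]
  refine Finset.sum_congr rfl fun j _ => ?_
  rw [Polynomial.mul_comp, Polynomial.C_comp, hcomp, iterate_derivative_comp_X_add_C]

lemma triangle_eq_box {M : ℕ} (g : ℕ → ℕ → Polynomial ℂ)
    (hg : ∀ p q, M ≤ p + q → g p q = 0) :
    ∑ t ∈ Finset.range M, ∑ x ∈ Finset.HasAntidiagonal.antidiagonal t, g x.1 x.2
      = ∑ p ∈ Finset.range M, ∑ q ∈ Finset.range M, g p q := by
  have h1 : ∑ t ∈ Finset.range M, ∑ x ∈ Finset.HasAntidiagonal.antidiagonal t, g x.1 x.2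
      = ∑ x ∈ (Finset.range M).sigma (fun t => Finset.HasAntidiagonal.antidiagonal t), g x.2.1 x.2.2 :=
    (Finset.sum_sigma (Finset.range M) (fun t => Finset.HasAntidiagonal.antidiagonal t)
      (fun y => g y.2.1 y.2.2)).symm
  have h2 : ∑ x ∈ (Finset.range M).sigma (fun t => Finset.HasAntidiagonal.antidiagonal t), g x.2.1 x.2.2
      = ∑ x ∈ (Finset.range M ×ˢ Finset.range M).filter (fun x => x.1 + x.2 < M),
          g x.1 x.2 := by
    refine Finset.sum_nbij' (fun x => (x.2.1, x.2.2)) (fun x => ⟨x.1 + x.2, (x.1, x.2)⟩)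
      ?_ ?_ ?_ ?_ ?_
    · rintro ⟨t, p, q⟩ hx
      simp only [Finset.mem_sigma, Finset.mem_range, Finset.HasAntidiagonal.mem_antidiagonal] at hx
      simp [Finset.mem_filter, Finset.mem_product, Finset.mem_range]
      omega
    · rintro ⟨p, q⟩ hx
      simp [Finset.mem_filter, Finset.mem_product, Finset.mem_range] at hx
      simp [Finset.mem_sigma, Finset.mem_range, Finset.HasAntidiagonal.mem_antidiagonal]
      omega
    · rintro ⟨t, p, q⟩ hx
      simp only [Finset.mem_sigma, Finset.mem_range, Finset.HasAntidiagonal.mem_antidiagonal] at hx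
      simp only [Sigma.mk.inj_iff, heq_eq_eq]
      exact ⟨hx.2, trivial⟩
    · rintro ⟨p, q⟩ _
      rfl
    · rintro ⟨t, p, q⟩ _
      rfl
  have h3 : ∑ x ∈ (Finset.range M ×ˢ Finset.range M).filter (fun x => x.1 + x.2 < M),
      g x.1 x.2 = ∑ x ∈ Finset.range M ×ˢ Finset.range M, g x.1 x.2 := by
    apply Finset.sum_filter_of_ne
    intro x _ hne
    by_contra hlt
    exact hne (hg x.1 x.2 (by omega))
  rw [h1, h2, h3, Finset.sum_product]

lemma OmegaOp_shift_sub (α : ℂ) (P : Polynomial ℂ) :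
    OmegaOp α (P.comp (Polynomial.X + Polynomial.C 1)) - OmegaOp α P
      = OmegaOp (α - 1) (Polynomial.derivative P) := by
  have hd : P.natDegree < P.natDegree + 1 := Nat.lt_succ_self _
  set d := P.natDegree with hdef
  have hdc : (P.comp (Polynomial.X + Polynomial.C 1)).natDegree < d + 1 := by
    rw [Polynomial.natDegree_comp, Polynomial.natDegree_X_add_C, mul_one]; exact hd
  have hdd : (Polynomial.derivative P).natDegree < d + 1 :=
    lt_of_le_of_lt (le_trans (Polynomial.natDegree_derivative_le P) (Nat.sub_le _ _)) hd
  have hDj : ∀ j : ℕ, (Polynomial.derivative^[j] P).natDegree < d + 1 := fun j =>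
    lt_of_le_of_lt (le_trans (Polynomial.natDegree_iterate_derivative P j) (Nat.sub_le _ _)) hd
  have hvan : ∀ k : ℕ, d < k → Polynomial.derivative^[k] P = 0 := fun k hk =>
    Polynomial.iterate_derivative_eq_zero hk
  rw [OmegaOp_eq_sum α _ hdc, OmegaOp_eq_sum α P hd, OmegaOp_eq_sum (α - 1) _ hdd]
  have step1 : ∑ j ∈ Finset.range (d+1),
      Polynomial.C (cfc j (bernoulliBasePow α)) *
        Polynomial.derivative^[j] (P.comp (Polynomial.X + Polynomial.C 1))
      = ∑ j ∈ Finset.range (d+1), ∑ s ∈ Finset.range (d+1),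
          Polynomial.C (cfc j (bernoulliBasePow α) * ((s.factorial : ℂ))⁻¹) *
            Polynomial.derivative^[j + s] P := by
    refine Finset.sum_congr rfl fun j _ => ?_
    rw [iterate_derivative_comp_X_add_C, taylor_shift _ (hDj j), Finset.mul_sum]
    refine Finset.sum_congr rfl fun s _ => ?_
    rw [Polynomial.smul_eq_C_mul, ← mul_assoc, ← map_mul, ← Function.iterate_add_apply]
    rw [show s + j = j + s from Nat.add_comm s j]
  rw [step1, ← Finset.sum_sub_distrib]
  have step2 : ∀ j ∈ Finset.range (d+1),
      (∑ s ∈ Finset.range (d+1),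
          Polynomial.C (cfc j (bernoulliBasePow α) * ((s.factorial : ℂ))⁻¹) *
            Polynomial.derivative^[j + s] P)
        - Polynomial.C (cfc j (bernoulliBasePow α)) * Polynomial.derivative^[j] P
      = ∑ s ∈ Finset.range (d+1),
          Polynomial.C (cfc j (bernoulliBasePow α) * (((s+1).factorial : ℂ))⁻¹) *
            Polynomial.derivative^[j + s + 1] P := by
    intro j _
    rw [Finset.sum_range_succ']
    have hz : Polynomial.C (cfc j (bernoulliBasePow α) * (((0:ℕ).factorial : ℂ))⁻¹) *
        Polynomial.derivative^[j + 0] P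
        = Polynomial.C (cfc j (bernoulliBasePow α)) * Polynomial.derivative^[j] P := by
      norm_num
    rw [hz, add_sub_cancel_right]
    simp only [← add_assoc]
    apply Finset.sum_subset (Finset.range_subset_range.2 (by omega))
    intro s _ hs'
    simp only [Finset.mem_range, not_lt] at hs'
    rw [hvan (j + s + 1) (by omega), mul_zero]
  rw [Finset.sum_congr rfl step2]
  have step3 : ∑ t ∈ Finset.range (d+1),
      Polynomial.C (cfc t (bernoulliBasePow (α - 1))) *
        Polynomial.derivative^[t] (Polynomial.derivative P)
      = ∑ t ∈ Finset.range (d+1), ∑ x ∈ Finset.HasAntidiagonal.antidiagonal t,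
          Polynomial.C (cfc x.1 (bernoulliBasePow α) * (((x.2+1).factorial : ℂ))⁻¹) *
            Polynomial.derivative^[x.1 + x.2 + 1] P := by
    refine Finset.sum_congr rfl fun t ht => ?_
    rw [coeff_bernoulliBasePow_sub_one, map_sum, Finset.sum_mul]
    refine Finset.sum_congr rfl fun x hx => ?_
    rw [Finset.HasAntidiagonal.mem_antidiagonal] at hx
    rw [← Function.iterate_succ_apply, ← hx]
  have hg : ∀ p q : ℕ, d + 1 ≤ p + q →
      Polynomial.C (cfc p (bernoulliBasePow α) * (((q+1).factorial : ℂ))⁻¹) *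
        Polynomial.derivative^[p + q + 1] P = 0 := by
    intro p q h
    rw [hvan (p + q + 1) (by omega), mul_zero]
  rw [step3, triangle_eq_box (fun p q => Polynomial.C (cfc p (bernoulliBasePow α) *
      (((q+1).factorial : ℂ))⁻¹) * Polynomial.derivative^[p + q + 1] P) hg]

lemma omega_D_pow_prod (α d e : ℂ) (a b r : ℕ) :
    OmegaOp α ((r.factorial : ℂ)⁻¹ • Polynomial.derivative^[r]
        ((Polynomial.X + Polynomial.C d) ^ (a + r) * (Polynomial.X + Polynomial.C e) ^ (b + r)))
      = ∑ k ∈ Finset.range (b + r + 1),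
          Polynomial.C ((e - d) ^ (b + r - k) * ((b + r).choose k : ℂ) *
            ((a + k + r).choose r : ℂ)) *
            (genBernoulliPoly α (a + k)).comp (Polynomial.X + Polynomial.C d) := by
  have hf0 : (r.factorial : ℂ) ≠ 0 := Nat.cast_ne_zero.2 (Nat.factorial_ne_zero r)
  have hQ : (r.factorial : ℂ)⁻¹ • Polynomial.derivative^[r]
        ((Polynomial.X + Polynomial.C d) ^ (a + r) * (Polynomial.X + Polynomial.C e) ^ (b + r))
      = ∑ k ∈ Finset.range (b + r + 1),
          Polynomial.C ((e - d) ^ (b + r - k) * ((b + r).choose k : ℂ) *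
            ((a + k + r).choose r : ℂ)) * (Polynomial.X + Polynomial.C d) ^ (a + k) := by
    have hexp : ((Polynomial.X + Polynomial.C e : Polynomial ℂ)) ^ (b + r)
        = ∑ k ∈ Finset.range (b + r + 1),
            Polynomial.C ((e - d) ^ (b + r - k) * ((b + r).choose k : ℂ)) *
              (Polynomial.X + Polynomial.C d) ^ k := by
      have he : (Polynomial.X + Polynomial.C e : Polynomial ℂ)
          = (Polynomial.X + Polynomial.C d) + Polynomial.C (e - d) := by
        rw [add_assoc, ← Polynomial.C_add]
        ring_nf
      rw [he, add_pow]
      refine Finset.sum_congr rfl fun k hk => ?_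
      rw [← Polynomial.C_pow, ← Polynomial.C_eq_natCast]
      rw [show ((Polynomial.X + Polynomial.C d : Polynomial ℂ)) ^ k *
          Polynomial.C ((e - d) ^ (b + r - k)) * Polynomial.C (((b + r).choose k : ℂ))
          = Polynomial.C ((e - d) ^ (b + r - k)) * Polynomial.C (((b + r).choose k : ℂ)) *
            (Polynomial.X + Polynomial.C d) ^ k from by ring]
      rw [← map_mul, mul_comm ((e - d) ^ (b + r - k)) (((b + r).choose k : ℂ))]
    rw [hexp, Finset.mul_sum, Polynomial.iterate_derivative_sum, Finset.smul_sum]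
    refine Finset.sum_congr rfl fun k hk => ?_
    have hm : (Polynomial.X + Polynomial.C d : Polynomial ℂ) ^ (a + r) *
        (Polynomial.C ((e - d) ^ (b + r - k) * ((b + r).choose k : ℂ)) *
          (Polynomial.X + Polynomial.C d) ^ k)
        = Polynomial.C ((e - d) ^ (b + r - k) * ((b + r).choose k : ℂ)) *
            (Polynomial.X + Polynomial.C d) ^ (a + r + k) := by
      rw [pow_add, pow_add]
      ring
    rw [hm, Polynomial.iterate_derivative_C_mul]
    have hD : Polynomial.derivative^[r]
          (((Polynomial.X + Polynomial.C d) : Polynomial ℂ) ^ (a + r + k))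
        = (((a + r + k).descFactorial r : ℕ) : ℂ) • (Polynomial.X + Polynomial.C d) ^ (a + k) := by
      have h1 : ((Polynomial.X + Polynomial.C d : Polynomial ℂ)) ^ (a + r + k)
          = (Polynomial.X ^ (a + r + k)).comp (Polynomial.X + Polynomial.C d) := by
        rw [Polynomial.pow_comp, Polynomial.X_comp]
      rw [h1, iterate_derivative_comp_X_add_C, Polynomial.iterate_derivative_X_pow_eq_smul,
        Polynomial.smul_comp, Polynomial.pow_comp, Polynomial.X_comp]
      rw [show a + r + k - r = a + k from by omega]
    rw [hD, Polynomial.smul_eq_C_mul, Polynomial.smul_eq_C_mul]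
    have hdf : (((a + r + k).descFactorial r : ℕ) : ℂ)
        = (r.factorial : ℂ) * ((a + k + r).choose r : ℂ) := by
      rw [show a + r + k = a + k + r from by omega, Nat.descFactorial_eq_factorial_mul_choose]
      push_cast
      ring
    rw [hdf]
    simp only [map_mul]
    have hs1 : Polynomial.C ((r.factorial : ℂ))⁻¹ * Polynomial.C ((r.factorial : ℂ)) = 1 := by
      rw [← map_mul, inv_mul_cancel₀ hf0, map_one]
    linear_combination (Polynomial.C ((e - d) ^ (b + r - k)) *
      Polynomial.C (((b + r).choose k : ℂ)) * Polynomial.C (((a + k + r).choose r : ℂ)) *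
      (Polynomial.X + Polynomial.C d) ^ (a + k)) * hs1
  rw [hQ, OmegaOp_sum]
  refine Finset.sum_congr rfl fun k _ => ?_
  rw [OmegaOp_C_mul, OmegaOp_X_add_C_pow]

end PolyPart


/-- Corollary (generalization of identities of Nielsen and Agoh): for `α, β ∈ ℂ` and
`ℓ, n, m, r ∈ ℕ`, in `ℂ[X]`:
`∑_{k=0}^{n+r} (m-2β)^{n+r-k} C(n+r,k) C(ℓ+k+r,r) B_{ℓ+k}^{(α)}(X+β)`
`- ∑_{k=0}^{ℓ+r} (-1)^{r+ℓ+k} (m-2β)^{ℓ+r-k} C(ℓ+r,k) C(n+k+r,r) B_{n+k}^{(α)}(X-β+m-1)`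
`= Ω_{α-1} ( (1/r!) D^{r+1} ( (X+β-1)^{ℓ+r} (X-β+m-1)^{n+r} ) )`. -/
theorem nielsen_agoh_generalization (α β : ℂ) (ℓ n m r : ℕ) :
    (∑ k ∈ Finset.range (n + r + 1),
        Polynomial.C (((m : ℂ) - 2 * β) ^ (n + r - k) * ((n + r).choose k : ℂ) *
            ((ℓ + k + r).choose r : ℂ)) *
          (genBernoulliPoly α (ℓ + k)).comp (Polynomial.X + Polynomial.C β)) -
      ∑ k ∈ Finset.range (ℓ + r + 1),
        Polynomial.C ((-1 : ℂ) ^ (r + ℓ + k) * ((m : ℂ) - 2 * β) ^ (ℓ + r - k) *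
            ((ℓ + r).choose k : ℂ) * ((n + k + r).choose r : ℂ)) *
          (genBernoulliPoly α (n + k)).comp
            (Polynomial.X + Polynomial.C (-β + (m : ℂ) - 1)) =
    OmegaOp (α - 1)
      ((r.factorial : ℂ)⁻¹ •
        Polynomial.derivative^[r + 1]
          ((Polynomial.X + Polynomial.C (β - 1)) ^ (ℓ + r) *
            (Polynomial.X + Polynomial.C (-β + (m : ℂ) - 1)) ^ (n + r))) := by
  have h1 : (∑ k ∈ Finset.range (n + r + 1),
      Polynomial.C (((m : ℂ) - 2 * β) ^ (n + r - k) * ((n + r).choose k : ℂ) *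
          ((ℓ + k + r).choose r : ℂ)) *
        (genBernoulliPoly α (ℓ + k)).comp (Polynomial.X + Polynomial.C β))
      = OmegaOp α (((r.factorial : ℂ)⁻¹ • Polynomial.derivative^[r]
          ((Polynomial.X + Polynomial.C (β - 1)) ^ (ℓ + r) *
            (Polynomial.X + Polynomial.C (-β + (m : ℂ) - 1)) ^ (n + r))).comp
          (Polynomial.X + Polynomial.C 1)) := by
    have hcomp1 : (((r.factorial : ℂ)⁻¹ • Polynomial.derivative^[r]
        ((Polynomial.X + Polynomial.C (β - 1)) ^ (ℓ + r) *
          (Polynomial.X + Polynomial.C (-β + (m : ℂ) - 1)) ^ (n + r))).comp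
          (Polynomial.X + Polynomial.C 1))
        = (r.factorial : ℂ)⁻¹ • Polynomial.derivative^[r]
            ((Polynomial.X + Polynomial.C β) ^ (ℓ + r) *
              (Polynomial.X + Polynomial.C (-β + (m : ℂ))) ^ (n + r)) := by
      rw [Polynomial.smul_comp, ← iterate_derivative_comp_X_add_C]
      congr 2
      rw [Polynomial.mul_comp, Polynomial.pow_comp, Polynomial.pow_comp, Polynomial.add_comp,
        Polynomial.X_comp, Polynomial.C_comp, Polynomial.add_comp, Polynomial.X_comp,
        Polynomial.C_comp]
      have e1 : (Polynomial.X + Polynomial.C (1:ℂ)) + Polynomial.C (β - 1)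
          = Polynomial.X + Polynomial.C β := by
        rw [add_assoc, ← Polynomial.C_add]
        norm_num
      have e2 : (Polynomial.X + Polynomial.C (1:ℂ)) + Polynomial.C (-β + (m : ℂ) - 1)
          = Polynomial.X + Polynomial.C (-β + (m : ℂ)) := by
        rw [add_assoc, ← Polynomial.C_add]
        ring_nf
      rw [e1, e2]
    rw [hcomp1, omega_D_pow_prod α β (-β + (m : ℂ)) ℓ n r]
    refine Finset.sum_congr rfl fun k hk => ?_
    rw [show (-β + (m : ℂ)) - β = (m : ℂ) - 2 * β from by ring]
  have h2 : (∑ k ∈ Finset.range (ℓ + r + 1),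
      Polynomial.C ((-1 : ℂ) ^ (r + ℓ + k) * ((m : ℂ) - 2 * β) ^ (ℓ + r - k) *
          ((ℓ + r).choose k : ℂ) * ((n + k + r).choose r : ℂ)) *
        (genBernoulliPoly α (n + k)).comp
          (Polynomial.X + Polynomial.C (-β + (m : ℂ) - 1)))
      = OmegaOp α ((r.factorial : ℂ)⁻¹ • Polynomial.derivative^[r]
          ((Polynomial.X + Polynomial.C (β - 1)) ^ (ℓ + r) *
            (Polynomial.X + Polynomial.C (-β + (m : ℂ) - 1)) ^ (n + r))) := by
    rw [show ((Polynomial.X + Polynomial.C (β - 1)) ^ (ℓ + r) *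
        (Polynomial.X + Polynomial.C (-β + (m : ℂ) - 1)) ^ (n + r))
        = ((Polynomial.X + Polynomial.C (-β + (m : ℂ) - 1)) ^ (n + r) *
          (Polynomial.X + Polynomial.C (β - 1)) ^ (ℓ + r)) from mul_comm _ _]
    rw [omega_D_pow_prod α (-β + (m : ℂ) - 1) (β - 1) n ℓ r]
    refine Finset.sum_congr rfl fun k hk => ?_
    rw [Finset.mem_range] at hk
    have hk2 : (-((m : ℂ) - 2 * β)) ^ (ℓ + r - k)
        = (-1 : ℂ) ^ (r + ℓ + k) * ((m : ℂ) - 2 * β) ^ (ℓ + r - k) := by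
      rw [neg_pow]
      congr 1
      rw [show r + ℓ + k = (ℓ + r - k) + 2 * k from by omega, pow_add, pow_mul, neg_one_sq,
        one_pow, mul_one]
    congr 2
    rw [show (β - 1) - (-β + (m : ℂ) - 1) = -((m : ℂ) - 2 * β) from by ring, hk2]
  rw [h1, h2, OmegaOp_shift_sub]
  congr 1
  rw [Polynomial.derivative_smul]
  congr 1
  exact (Function.iterate_succ_apply' _ r _).symm
end

section
/- Let α, x, y ∈ ℂ and let ℓ, n, r be natural numbers. Then Σ_{k=0}^{n+r} C(n+r,k) C(ℓ+k+r,r) x^{n+r−k} B_{ℓ+k}^{(α)}(y) = Σ_{k=0}^{ℓ+r} C(ℓ+r,k) C(n+k+r,r) (−x)^{ℓ+r−k} B_{n+k}^{(α)}(x+y). -/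
open scoped BigOperators
open Polynomial Finset

lemma chooseSub (n k s : ℕ) (h : s ≤ k) :
    n.choose k * k.choose s = n.choose s * (n - s).choose (k - s) := by
  rcases le_or_gt k n with hkn | hkn
  · exact Nat.choose_mul (n := n) h
  · rw [Nat.choose_eq_zero_of_lt hkn]
    rcases le_or_gt s n with hsn | hsn
    · rw [Nat.choose_eq_zero_of_lt (by omega : n - s < k - s)]; ring
    · rw [Nat.choose_eq_zero_of_lt hsn]; ring

lemma chooseHelper (a r j : ℕ) :
    (a + r).choose r * a.choose j = (r + j).choose r * (a + r).choose (r + j) := by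
  have h := chooseSub (a + r) (r + j) r (by omega)
  have h1 : a + r - r = a := by omega
  have h2 : r + j - r = j := by omega
  rw [h1, h2] at h
  rw [← h, Nat.mul_comm]

lemma chooseHelper2 (m i t : ℕ) :
    m.choose (i + t) * (i + t).choose i = m.choose i * (m - i).choose t := by
  have h := chooseSub m (i + t) i (by omega)
  have h2 : i + t - i = t := by omega
  rw [h2] at h
  exact h

lemma negOnePowSub (m k : ℕ) (h : k ≤ m) : (-1 : ℂ) ^ (m - k) = (-1) ^ m * (-1) ^ k := by
  have h1 : (-1 : ℂ) ^ (m - k) * (-1) ^ k = (-1) ^ m := by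
    rw [← pow_add]; congr 1; omega
  have h2 : ((-1 : ℂ) ^ k) * ((-1 : ℂ) ^ k) = 1 := by
    rw [← pow_add, ← two_mul, pow_mul]; norm_num
  calc (-1 : ℂ) ^ (m - k) = (-1 : ℂ) ^ (m-k) * ((-1)^k * (-1)^k) := by rw [h2, mul_one]
    _ = (-1)^m * (-1)^k := by rw [← mul_assoc, h1]

lemma altSum (m : ℕ) : ∀ a j : ℕ,
    ∑ k ∈ range (m + 1), (-1 : ℂ) ^ k * (m.choose k : ℂ) * ((a + k).choose j : ℂ)
      = (-1) ^ m * (if m ≤ j then ((a.choose (j - m) : ℕ) : ℂ) else 0) := by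
  induction m with
  | zero => intro a j; simp
  | succ m ih =>
    intro a j
    have hS : ∑ k ∈ range (m + 1), (-1 : ℂ) ^ k * (m.choose k : ℂ) * ((a + k).choose j : ℂ)
        = (a.choose j : ℂ)
          - ∑ k ∈ range (m + 1), (-1 : ℂ) ^ k * (m.choose (k+1) : ℂ) * ((a + k + 1).choose j : ℂ) := by
      rw [Finset.sum_range_succ'
        (fun k => (-1 : ℂ) ^ k * (m.choose k : ℂ) * ((a + k).choose j : ℂ))]
      rw [Finset.sum_range_succ
        (fun k => (-1 : ℂ) ^ k * (m.choose (k+1) : ℂ) * ((a + k + 1).choose j : ℂ))]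
      rw [Nat.choose_succ_self]
      have : ∀ k ∈ range m, (-1 : ℂ) ^ (k+1) * (m.choose (k+1) : ℂ) * ((a + (k+1)).choose j : ℂ)
          = -((-1 : ℂ) ^ k * (m.choose (k+1) : ℂ) * ((a + k + 1).choose j : ℂ)) := by
        intro k _
        have : a + (k+1) = a + k + 1 := by omega
        rw [this]; ring
      rw [Finset.sum_congr rfl this, Finset.sum_neg_distrib]
      simp only [Nat.choose_zero_right, Nat.cast_one, add_zero, mul_zero, zero_mul, mul_one,
        one_mul]
      ring
    have key : ∑ k ∈ range (m + 1 + 1), (-1 : ℂ) ^ k * ((m+1).choose k : ℂ) * ((a + k).choose j : ℂ)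
        = (∑ k ∈ range (m + 1), (-1 : ℂ) ^ k * (m.choose k : ℂ) * ((a + k).choose j : ℂ))
          - (∑ k ∈ range (m + 1), (-1 : ℂ) ^ k * (m.choose k : ℂ) * (((a+1) + k).choose j : ℂ)) := by
      rw [Finset.sum_range_succ'
        (fun k => (-1 : ℂ) ^ k * ((m+1).choose k : ℂ) * ((a + k).choose j : ℂ))]
      have exp : ∀ k ∈ range (m+1),
          (-1 : ℂ) ^ (k+1) * ((m+1).choose (k+1) : ℂ) * ((a + (k+1)).choose j : ℂ)
          = -((-1 : ℂ) ^ k * (m.choose k : ℂ) * (((a+1) + k).choose j : ℂ))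
            + -((-1 : ℂ) ^ k * (m.choose (k+1) : ℂ) * ((a + k + 1).choose j : ℂ)) := by
        intro k _
        rw [Nat.choose_succ_succ]
        have e1 : a + (k + 1) = (a + 1) + k := by omega
        have e2 : a + k + 1 = (a + 1) + k := by omega
        rw [e1, e2]
        push_cast
        ring
      rw [Finset.sum_congr rfl exp, Finset.sum_add_distrib, Finset.sum_neg_distrib,
        Finset.sum_neg_distrib]
      rw [hS]
      simp only [Nat.choose_zero_right, Nat.cast_one, add_zero, mul_zero, zero_mul, mul_one,
        one_mul]
      ring
    rw [key, ih a j, ih (a+1) j]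
    by_cases h1 : m + 1 ≤ j
    · rw [if_pos (by omega : m ≤ j), if_pos (by omega : m ≤ j), if_pos h1]
      have e : j - m = (j - (m+1)) + 1 := by omega
      rw [e, Nat.choose_succ_succ]
      push_cast
      ring
    · rw [if_neg h1]
      by_cases h2 : m ≤ j
      · have : j - m = 0 := by omega
        rw [if_pos h2, if_pos h2, this]
        simp
      · rw [if_neg h2, if_neg h2]
        ring


noncomputable def Pb (b : ℕ → ℂ) (m : ℕ) (z : ℂ) : ℂ :=
  ∑ i ∈ range (m + 1), (m.choose i : ℂ) * b i * z ^ (m - i)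

lemma addThm (b : ℕ → ℂ) (x y : ℂ) (m : ℕ) :
    Pb b m (x + y) = ∑ j ∈ range (m + 1), (m.choose j : ℂ) * x ^ (m - j) * Pb b j y := by
  symm
  calc
    ∑ j ∈ range (m + 1), (m.choose j : ℂ) * x ^ (m - j) * Pb b j y
        = ∑ j ∈ range (m + 1), ∑ i ∈ range (m + 1),
            (m.choose j : ℂ) * (j.choose i : ℂ) * b i * x ^ (m - j) * y ^ (j - i) := by
          refine Finset.sum_congr rfl fun j hj => ?_
          simp only [Finset.mem_range] at hj
          calc (m.choose j : ℂ) * x ^ (m - j) * Pb b j y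
              = ∑ i ∈ range (j + 1),
                  (m.choose j : ℂ) * (j.choose i : ℂ) * b i * x ^ (m - j) * y ^ (j - i) := by
                rw [Pb, Finset.mul_sum]
                exact Finset.sum_congr rfl fun i _ => by ring
            _ = ∑ i ∈ range (m + 1),
                  (m.choose j : ℂ) * (j.choose i : ℂ) * b i * x ^ (m - j) * y ^ (j - i) := by
                refine Finset.sum_subset (Finset.range_subset_range.2 (by omega)) ?_
                intro i _ hi
                simp only [Finset.mem_range, not_lt] at hi
                simp [Nat.choose_eq_zero_of_lt (show j < i by omega)]
    _ = ∑ i ∈ range (m + 1), ∑ j ∈ range (m + 1),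
            (m.choose j : ℂ) * (j.choose i : ℂ) * b i * x ^ (m - j) * y ^ (j - i) :=
          Finset.sum_comm
    _ = ∑ i ∈ range (m + 1), (m.choose i : ℂ) * b i * (x + y) ^ (m - i) := by
          refine Finset.sum_congr rfl fun i hi => ?_
          simp only [Finset.mem_range] at hi
          calc ∑ j ∈ range (m + 1),
                (m.choose j : ℂ) * (j.choose i : ℂ) * b i * x ^ (m - j) * y ^ (j - i)
              = ∑ j ∈ Finset.Ico i (m + 1),
                (m.choose j : ℂ) * (j.choose i : ℂ) * b i * x ^ (m - j) * y ^ (j - i) := by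
                symm
                refine Finset.sum_subset (fun j hj => ?_) (fun j _ hj => ?_)
                · simp only [Finset.mem_Ico] at hj; simp only [Finset.mem_range]; omega
                · simp only [Finset.mem_range] at *
                  simp only [Finset.mem_Ico, not_and, not_le] at hj
                  have : j < i := by
                    by_contra hc
                    push_neg at hc
                    omega
                  simp [Nat.choose_eq_zero_of_lt this]
            _ = ∑ t ∈ range (m + 1 - i),
                (m.choose (i + t) : ℂ) * ((i + t).choose i : ℂ) * b i * x ^ (m - (i + t))
                  * y ^ ((i + t) - i) := by rw [Finset.sum_Ico_eq_sum_range]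
            _ = ∑ t ∈ range (m - i + 1),
                (m.choose i : ℂ) * b i * (((m - i).choose t : ℂ) * y ^ t * x ^ ((m - i) - t)) := by
                rw [show m + 1 - i = m - i + 1 by omega]
                refine Finset.sum_congr rfl fun t ht => ?_
                simp only [Finset.mem_range] at ht
                have hc : ((m.choose (i + t) : ℂ)) * ((i + t).choose i : ℂ)
                    = (m.choose i : ℂ) * ((m - i).choose t : ℂ) := by
                  exact_mod_cast congrArg (Nat.cast : ℕ → ℂ) (chooseHelper2 m i t)
                have e1 : (i + t) - i = t := by omega
                have e2 : m - (i + t) = (m - i) - t := by omega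
                rw [e1, e2]
                calc (m.choose (i + t) : ℂ) * ((i + t).choose i : ℂ) * b i * x ^ (m - i - t) * y ^ t
                    = ((m.choose (i + t) : ℂ) * ((i + t).choose i : ℂ)) * (b i * x ^ (m - i - t) * y ^ t) := by ring
                  _ = ((m.choose i : ℂ) * ((m - i).choose t : ℂ)) * (b i * x ^ (m - i - t) * y ^ t) := by rw [hc]
                  _ = (m.choose i : ℂ) * b i * (((m - i).choose t : ℂ) * y ^ t * x ^ ((m - i) - t)) := by ring
            _ = (m.choose i : ℂ) * b i * (x + y) ^ (m - i) := by
                rw [← Finset.mul_sum]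
                congr 1
                rw [show x + y = y + x from add_comm x y, add_pow]
                exact Finset.sum_congr rfl fun t _ => by ring
    _ = Pb b m (x + y) := rfl


lemma mainPb (b : ℕ → ℂ) (x y : ℂ) (ℓ n r : ℕ) :
    ∑ k ∈ range (n + r + 1),
        ((n + r).choose k : ℂ) * ((ℓ + k + r).choose r : ℂ) * x ^ (n + r - k) * Pb b (ℓ + k) y
    = ∑ k ∈ range (ℓ + r + 1),
        ((ℓ + r).choose k : ℂ) * ((n + k + r).choose r : ℂ) * (-x) ^ (ℓ + r - k)
          * Pb b (n + k) (x + y) := by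
  set M : ℕ → ℂ := fun j =>
    (if ℓ ≤ j then ((n + r).choose (j - ℓ) : ℂ) * ((r + j).choose r : ℂ) else 0)
      * x ^ (n + ℓ + r - j) * Pb b j y with hM
  have hsq : ((-1 : ℂ)) ^ (ℓ + r) * (-1) ^ (ℓ + r) = 1 := by
    rw [← pow_add, ← two_mul, pow_mul]; norm_num
  have hL : ∑ k ∈ range (n + r + 1),
      ((n + r).choose k : ℂ) * ((ℓ + k + r).choose r : ℂ) * x ^ (n + r - k) * Pb b (ℓ + k) y
      = ∑ j ∈ range (n + ℓ + r + 1), M j := by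
    calc ∑ k ∈ range (n + r + 1),
        ((n + r).choose k : ℂ) * ((ℓ + k + r).choose r : ℂ) * x ^ (n + r - k) * Pb b (ℓ + k) y
        = ∑ k ∈ range (n + r + 1), M (ℓ + k) := by
          refine Finset.sum_congr rfl fun k hk => ?_
          simp only [Finset.mem_range] at hk
          simp only [hM]
          simp only [if_pos (show ℓ ≤ ℓ + k by omega)]
          rw [show ℓ + k - ℓ = k by omega, show n + ℓ + r - (ℓ + k) = n + r - k by omega,
            show r + (ℓ + k) = ℓ + k + r by omega]
      _ = ∑ j ∈ Finset.Ico ℓ (n + ℓ + r + 1), M j := by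
          rw [Finset.sum_Ico_eq_sum_range, show n + ℓ + r + 1 - ℓ = n + r + 1 by omega]
      _ = ∑ j ∈ range (n + ℓ + r + 1), M j := by
          refine Finset.sum_subset (fun j hj => ?_) (fun j _ hj => ?_)
          · simp only [Finset.mem_Ico] at hj; simp only [Finset.mem_range]; omega
          · rename_i hjr
            simp only [Finset.mem_range] at hjr
            simp only [Finset.mem_Ico, not_and, not_le] at hj
            have hnl : ¬ ℓ ≤ j := by
              by_contra hc
              have := hj hc
              omega
            simp only [hM, if_neg hnl, zero_mul]
  have hR : ∑ k ∈ range (ℓ + r + 1),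
      ((ℓ + r).choose k : ℂ) * ((n + k + r).choose r : ℂ) * (-x) ^ (ℓ + r - k)
        * Pb b (n + k) (x + y)
      = ∑ j ∈ range (n + ℓ + r + 1), M j := by
    calc ∑ k ∈ range (ℓ + r + 1),
        ((ℓ + r).choose k : ℂ) * ((n + k + r).choose r : ℂ) * (-x) ^ (ℓ + r - k)
          * Pb b (n + k) (x + y)
        = ∑ k ∈ range (ℓ + r + 1), ∑ j ∈ range (n + ℓ + r + 1),
            ((ℓ + r).choose k : ℂ) * ((n + k + r).choose r : ℂ) * (-x) ^ (ℓ + r - k)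
              * (((n + k).choose j : ℂ) * x ^ (n + k - j) * Pb b j y) := by
          refine Finset.sum_congr rfl fun k hk => ?_
          simp only [Finset.mem_range] at hk
          rw [addThm, Finset.mul_sum]
          refine Finset.sum_subset (Finset.range_subset_range.2 (by omega)) ?_
          intro j _ hj
          simp only [Finset.mem_range, not_lt] at hj
          simp [Nat.choose_eq_zero_of_lt (show n + k < j by omega)]
      _ = ∑ j ∈ range (n + ℓ + r + 1), ∑ k ∈ range (ℓ + r + 1),
            ((ℓ + r).choose k : ℂ) * ((n + k + r).choose r : ℂ) * (-x) ^ (ℓ + r - k)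
              * (((n + k).choose j : ℂ) * x ^ (n + k - j) * Pb b j y) := Finset.sum_comm
      _ = ∑ j ∈ range (n + ℓ + r + 1), M j := by
          refine Finset.sum_congr rfl fun j hj => ?_
          simp only [Finset.mem_range] at hj
          calc ∑ k ∈ range (ℓ + r + 1),
              ((ℓ + r).choose k : ℂ) * ((n + k + r).choose r : ℂ) * (-x) ^ (ℓ + r - k)
                * (((n + k).choose j : ℂ) * x ^ (n + k - j) * Pb b j y)
              = ∑ k ∈ range (ℓ + r + 1),
                ((-1 : ℂ) ^ (ℓ + r) * ((r + j).choose r : ℂ) * x ^ (n + ℓ + r - j) * Pb b j y)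
                  * ((-1 : ℂ) ^ k * ((ℓ + r).choose k : ℂ) * (((n + r) + k).choose (r + j) : ℂ)) := by
                refine Finset.sum_congr rfl fun k hk => ?_
                simp only [Finset.mem_range] at hk
                by_cases hjk : j ≤ n + k
                · have hx : (-x) ^ (ℓ + r - k) = (-1 : ℂ) ^ (ℓ + r) * (-1) ^ k * x ^ (ℓ + r - k) := by
                    rw [neg_pow, negOnePowSub (ℓ + r) k (by omega)]
                  have hxx : x ^ (ℓ + r - k) * x ^ (n + k - j) = x ^ (n + ℓ + r - j) := by
                    rw [← pow_add]; congr 1; omega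
                  have hc : ((n + k + r).choose r : ℂ) * ((n + k).choose j : ℂ)
                      = ((r + j).choose r : ℂ) * (((n + r) + k).choose (r + j) : ℂ) := by
                    have := chooseHelper (n + k) r j
                    rw [show n + k + r = (n + r) + k by omega] at this ⊢
                    exact_mod_cast congrArg (Nat.cast : ℕ → ℂ) this
                  calc ((ℓ + r).choose k : ℂ) * ((n + k + r).choose r : ℂ) * (-x) ^ (ℓ + r - k)
                        * (((n + k).choose j : ℂ) * x ^ (n + k - j) * Pb b j y)
                      = ((-1 : ℂ) ^ (ℓ + r) * (-1) ^ k * ((ℓ + r).choose k : ℂ) * Pb b j y)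
                          * (((n + k + r).choose r : ℂ) * ((n + k).choose j : ℂ))
                          * (x ^ (ℓ + r - k) * x ^ (n + k - j)) := by rw [hx]; ring
                    _ = ((-1 : ℂ) ^ (ℓ + r) * (-1) ^ k * ((ℓ + r).choose k : ℂ) * Pb b j y)
                          * (((r + j).choose r : ℂ) * (((n + r) + k).choose (r + j) : ℂ))
                          * (x ^ (n + ℓ + r - j)) := by rw [hxx, hc]
                    _ = ((-1 : ℂ) ^ (ℓ + r) * ((r + j).choose r : ℂ) * x ^ (n + ℓ + r - j) * Pb b j y)
                          * ((-1 : ℂ) ^ k * ((ℓ + r).choose k : ℂ) * (((n + r) + k).choose (r + j) : ℂ)) := by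
                        ring
                · have h1 : (n + k).choose j = 0 := Nat.choose_eq_zero_of_lt (by omega)
                  have h2 : ((n + r) + k).choose (r + j) = 0 := Nat.choose_eq_zero_of_lt (by omega)
                  rw [h1, h2]
                  push_cast
                  ring
            _ = ((-1 : ℂ) ^ (ℓ + r) * ((r + j).choose r : ℂ) * x ^ (n + ℓ + r - j) * Pb b j y)
                  * ∑ k ∈ range (ℓ + r + 1),
                    ((-1 : ℂ) ^ k * ((ℓ + r).choose k : ℂ) * (((n + r) + k).choose (r + j) : ℂ)) := by
                rw [← Finset.mul_sum]
            _ = M j := by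
                rw [altSum (ℓ + r) (n + r) (r + j)]
                simp only [hM]
                rw [show r + j - (ℓ + r) = j - ℓ from by omega]
                by_cases hlj : ℓ ≤ j
                · rw [if_pos (show ℓ + r ≤ r + j by omega), if_pos hlj]
                  linear_combination (((r + j).choose r : ℂ) * x ^ (n + ℓ + r - j) * Pb b j y
                    * ((n + r).choose (j - ℓ) : ℂ)) * hsq
                · rw [if_neg (show ¬ ℓ + r ≤ r + j by omega), if_neg hlj]
                  ring
  rw [hL, hR]

lemma evalPb (α : ℂ) (m : ℕ) (z : ℂ) :
    (genBernoulliPoly α m).eval z = Pb (genBernoulliNumber α) m z := by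
  simp [genBernoulliPoly, Pb, Polynomial.eval_finset_sum]

/-- For `α, x, y ∈ ℂ` and `ℓ, n, r ∈ ℕ`:
`∑_{k=0}^{n+r} C(n+r,k) C(ℓ+k+r,r) x^{n+r-k} B_{ℓ+k}^{(α)}(y)
 = ∑_{k=0}^{ℓ+r} C(ℓ+r,k) C(n+k+r,r) (-x)^{ℓ+r-k} B_{n+k}^{(α)}(x+y)`. -/
theorem reflection_identity (α x y : ℂ) (ℓ n r : ℕ) :
    ∑ k ∈ Finset.range (n + r + 1),
        ((n + r).choose k : ℂ) * ((ℓ + k + r).choose r : ℂ) * x ^ (n + r - k) *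
          (genBernoulliPoly α (ℓ + k)).eval y =
    ∑ k ∈ Finset.range (ℓ + r + 1),
        ((ℓ + r).choose k : ℂ) * ((n + k + r).choose r : ℂ) * (-x) ^ (ℓ + r - k) *
          (genBernoulliPoly α (n + k)).eval (x + y) := by
  simp only [evalPb]
  exact mainPb (genBernoulliNumber α) x y ℓ n r
end
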